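/- arXiv:0810.0816 — 9 statements merged into one kernel-verified Lean document; each statement's English description precedes it below -/
import Mathlib

section
/- For all integers N and r with 1 ≤ r ≤ N, the sum of the products N₁·N₂·⋯·N_r over all r-tuples (N₁,…,N_r) of positive integers with N₁+⋯+N_r = N equals the binomial coefficient C(N+r−1, 2r−1). -/
open Finset

/-- Recursive count: sum of products over compositions of `N` into `r` positive parts. -/
private def Svac : ℕ → ℕ → ℕ
  | 0, N => if N = 0 then 1 else 0
  | (r+1), N => ∑ k ∈ Icc 1 N, k * Svac r (N - k)

/-- Dual Vandermonde / hockey-stick convolution. -/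
private lemma dualVandermonde : ∀ n p q : ℕ,
    ∑ j ∈ range (n+1), (j.choose p) * ((n-j).choose q) = (n+1).choose (p+q+1) := by
  intro n
  induction n with
  | zero =>
    intro p q
    cases p <;> cases q <;> simp [Nat.choose]
  | succ n ih =>
    intro p q
    rw [sum_range_succ]
    cases q with
    | zero =>
      have h : ∀ j ∈ range (n+1), j.choose p * ((n+1-j).choose 0)
          = j.choose p * ((n-j).choose 0) := by
        intro j hj; simp
      rw [sum_congr rfl h, ih p 0]
      simp [Nat.choose_succ_succ (n+1) p]
      omega
    | succ q' =>
      have h : ∀ j ∈ range (n+1), j.choose p * ((n+1-j).choose (q'+1))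
          = j.choose p * ((n-j).choose q') + j.choose p * ((n-j).choose (q'+1)) := by
        intro j hj
        rw [mem_range] at hj
        have : n + 1 - j = (n - j) + 1 := by omega
        rw [this, Nat.choose_succ_succ, Nat.mul_add]
      rw [sum_congr rfl h, sum_add_distrib, ih p q', ih p (q'+1)]
      simp only [Nat.sub_self, Nat.choose_succ_succ 0 q', Nat.choose_zero_succ,
        Nat.choose_succ_succ (n+1+1)]
      have e1 : p + (q'+1) + 1 = p + q' + 1 + 1 := by omega
      have e2 : (n+1+1).choose (p+(q'+1)+1) = (n+1).choose (p+q'+1) + (n+1).choose (p+q'+1+1) := by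
        rw [e1, Nat.choose_succ_succ]
      have e3 : (n+1).choose (p+(q'+1)+1) = (n+1).choose (p+q'+1+1) := by rw [e1]
      omega

private lemma Svac_eq : ∀ r, 1 ≤ r → ∀ N, Svac r N = (N + r - 1).choose (2*r - 1) := by
  intro r
  induction r with
  | zero => intro h; omega
  | succ r ih =>
    intro _ N
    cases r with
    | zero =>
      -- Svac 1 N = N
      have : ∀ k ∈ Icc 1 N, k * Svac 0 (N - k) = if k = N then N else 0 := by
        intro k hk
        rw [mem_Icc] at hk
        by_cases hkN : k = N
        · subst hkN; simp [Svac]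
        · have : ¬ (N - k = 0) := by omega
          simp [Svac, this, hkN]
      rw [Svac, sum_congr rfl this, Finset.sum_ite_eq' (Icc 1 N) N (fun _ => N)]
      by_cases hN : 1 ≤ N
      · rw [if_pos (mem_Icc.mpr ⟨hN, le_rfl⟩)]; simp
      · have h0 : N = 0 := by omega
        subst h0; simp
    | succ r' =>
      set r := r' + 1 with hr
      have hr1 : 1 ≤ r := by omega
      rw [Svac]
      have step : ∀ k ∈ Icc 1 N, k * Svac r (N - k)
          = (k.choose 1) * ((N + r - 1 - k).choose (2*r - 1)) := by
        intro k hk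
        rw [mem_Icc] at hk
        rw [ih hr1]
        congr 1
        · simp [Nat.choose_one_right]
        · congr 1; omega
      rw [sum_congr rfl step]
      have hsub : Icc 1 N ⊆ range (N + r - 1 + 1) := by
        intro k hk; rw [mem_Icc] at hk; rw [mem_range]; omega
      rw [Finset.sum_subset hsub ?van]
      case van =>
        intro k hk hk2
        rw [mem_range] at hk; rw [mem_Icc] at hk2
        by_cases hk0 : k = 0
        · simp [hk0]
        · have hkN : N < k := by omega
          have : N + r - 1 - k < 2*r - 1 := by omega
          rw [Nat.choose_eq_zero_of_lt this, Nat.mul_zero]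
      rw [dualVandermonde (N + r - 1) 1 (2*r - 1)]
      congr 1 <;> omega

private lemma sum_eq_Svac : ∀ (r N M : ℕ), N ≤ M →
    ∑ f ∈ (Fintype.piFinset fun _ : Fin r => Icc 1 M).filter (fun f => ∑ i, f i = N),
      (∏ i, f i) = Svac r N := by
  intro r
  induction r with
  | zero =>
    intro N M _
    by_cases hN : N = 0 <;> simp [Svac, hN, Finset.filter_singleton] <;> omega
  | succ r ih =>
    intro N M hNM
    have inner : ∀ k ∈ Icc 1 M,
        (∑ g ∈ Fintype.piFinset fun _ : Fin r => Icc 1 M,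
          if k + ∑ i, g i = N then k * ∏ i, g i else 0)
        = if k ≤ N then k * Svac r (N - k) else 0 := by
      intro k hk
      by_cases hkN : k ≤ N
      · rw [if_pos hkN]
        rw [← Finset.sum_filter]
        have hcong : (Fintype.piFinset fun _ : Fin r => Icc 1 M).filter
              (fun g => k + ∑ i, g i = N)
            = (Fintype.piFinset fun _ : Fin r => Icc 1 M).filter
              (fun g => ∑ i, g i = N - k) := by
          apply Finset.filter_congr
          intro g _
          constructor <;> intro h <;> omega
        rw [hcong, ← Finset.mul_sum, ih (N - k) M (by omega)]
      · rw [if_neg hkN]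
        apply Finset.sum_eq_zero
        intro g _
        rw [if_neg (by omega)]
    have hbij : ∑ f ∈ (Fintype.piFinset fun _ : Fin (r+1) => Icc 1 M).filter
          (fun f => ∑ i, f i = N), (∏ i, f i)
        = ∑ p ∈ ((Icc 1 M) ×ˢ (Fintype.piFinset fun _ : Fin r => Icc 1 M)).filter
          (fun p => p.1 + ∑ i, p.2 i = N), p.1 * ∏ i, p.2 i := by
      refine Finset.sum_bij' (fun f _ => (f 0, Fin.tail f))
        (fun p _ => Fin.cons p.1 p.2) ?_ ?_ ?_ ?_ ?_
      · intro f hf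
        rw [mem_filter, Fintype.mem_piFinset] at hf
        rw [mem_filter, mem_product, Fintype.mem_piFinset]
        refine ⟨⟨hf.1 0, fun i => hf.1 i.succ⟩, ?_⟩
        show f 0 + ∑ i : Fin r, Fin.tail f i = N
        rw [← hf.2, Fin.sum_univ_succ]
        rfl
      · intro p hp
        rw [mem_filter, mem_product, Fintype.mem_piFinset] at hp
        rw [mem_filter, Fintype.mem_piFinset]
        constructor
        · intro i
          refine Fin.cases ?_ ?_ i
          · simpa using hp.1.1
          · intro j; simpa using hp.1.2 j
        · rw [Fin.sum_univ_succ]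
          simpa using hp.2
      · intro f _; exact Fin.cons_self_tail f
      · intro p _; simp
      · intro f _
        dsimp only
        rw [Fin.prod_univ_succ]
        rfl
    rw [hbij, Finset.sum_filter, Finset.sum_product]
    clear hbij
    rw [sum_congr rfl inner]
    rw [Svac]
    rw [← Finset.sum_subset (Finset.Icc_subset_Icc_right hNM) ?van2]
    case van2 =>
      intro k hk hk2
      rw [mem_Icc] at hk hk2
      rw [if_neg (by omega)]
    apply sum_congr rfl
    intro k hk
    rw [mem_Icc] at hk
    rw [if_pos hk.2]

/-- The number of quantum vacua of rank `r` of the U(N) theory with one adjoint: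
the sum of the products `N₁ ⋯ N_r` over all `r`-tuples of positive integers with
`N₁ + ⋯ + N_r = N` equals `C(N + r - 1, 2r - 1)`. -/
theorem vacua_count_rank (N r : ℕ) (h1 : 1 ≤ r) (h2 : r ≤ N) :
    ∑ f ∈ (Fintype.piFinset fun _ : Fin r => Finset.Icc 1 N).filter
        (fun f => ∑ i, f i = N), (∏ i, f i)
      = (N + r - 1).choose (2 * r - 1) := by
  rw [sum_eq_Svac r N N le_rfl, Svac_eq r h1 N]
end

section
/- Let R = ℂ(q)[X]/(X³ − q) and let S denote the image of X in R. Then the element s = S + S² of R satisfies s³ − 3q·s − q − q² = 0, and moreover (1 − q)·S = 2q + s − s² holds in R. -/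
/-- In the chiral ring `R = ℂ(q)[X]/(X³ - q)` of the pure SU(3) gauge theory,
with `S` the image of `X` and `q` the image of the constant `q`, the dual
primitive operator `s = S + S²` satisfies `s³ - 3qs - q - q² = 0`, and
`(1 - q)·S = 2q + s - s²`. -/
theorem su3_chiral_dual_relations :
    let I : Ideal (Polynomial (RatFunc ℂ)) :=
      Ideal.span {Polynomial.X ^ 3 - Polynomial.C RatFunc.X}
    let S := Ideal.Quotient.mk I Polynomial.X
    let q := Ideal.Quotient.mk I (Polynomial.C RatFunc.X)
    let s := S + S ^ 2
    s ^ 3 - 3 * q * s - q - q ^ 2 = 0 ∧ (1 - q) * S = 2 * q + s - s ^ 2 := by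
  intro I S q s
  have h : S ^ 3 = q := by
    have h0 : Ideal.Quotient.mk I (Polynomial.X ^ 3 - Polynomial.C RatFunc.X) = 0 :=
      Ideal.Quotient.eq_zero_iff_mem.mpr (Ideal.subset_span rfl)
    have h1 : S ^ 3 - q = 0 := by simpa [S, q] using h0
    exact sub_eq_zero.mp h1
  exact ⟨by linear_combination (1 + 3 * S + 3 * S ^ 2 + S ^ 3 + q) * h,
    by linear_combination (2 + S) * h⟩
end

section
/- The polynomial X³ − 3q·X − (q + q²) is irreducible in ℂ(q)[X], where ℂ(q) is the field of rational functions in one indeterminate q over ℂ. -/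
open Polynomial

noncomputable def su3Poly : Polynomial (Polynomial ℂ) :=
  X ^ 3 - C (3 * X) * X - C (X + X ^ 2)

lemma su3Poly_natDegree : su3Poly.natDegree = 3 := by
  unfold su3Poly
  compute_degree!

lemma su3Poly_monic : su3Poly.Monic := by
  unfold su3Poly
  monicity!

lemma su3Poly_coeff0 : su3Poly.coeff 0 = -(X + X ^ 2) := by
  simp only [su3Poly, coeff_sub, coeff_X_pow, coeff_C_mul, coeff_X, coeff_C]; norm_num

lemma su3Poly_coeff1 : su3Poly.coeff 1 = -(3 * X) := by
  simp only [su3Poly, coeff_sub, coeff_X_pow, coeff_C_mul, coeff_X, coeff_C]; norm_num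

lemma su3Poly_coeff2 : su3Poly.coeff 2 = 0 := by
  simp only [su3Poly, coeff_sub, coeff_X_pow, coeff_C_mul, coeff_X, coeff_C]; norm_num

lemma su3Poly_eisenstein :
    su3Poly.IsEisensteinAt (Ideal.span {(X : Polynomial ℂ)}) := by
  constructor
  · rw [su3Poly_monic.leadingCoeff, Ideal.mem_span_singleton]
    intro h
    have := natDegree_le_of_dvd h one_ne_zero
    simp at this
  · intro n hn
    rw [su3Poly_natDegree] at hn
    interval_cases n
    · rw [su3Poly_coeff0, Ideal.mem_span_singleton]
      exact ⟨-(1 + X), by ring⟩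
    · rw [su3Poly_coeff1, Ideal.mem_span_singleton]
      exact ⟨-3, by ring⟩
    · rw [su3Poly_coeff2]
      exact Ideal.zero_mem _
  · rw [su3Poly_coeff0, Ideal.span_singleton_pow, Ideal.mem_span_singleton, dvd_neg]
    intro h
    have h2 : (X : Polynomial ℂ) ^ 2 ∣ X := (dvd_add_right (dvd_refl _)).mp
      (by rwa [add_comm] at h)
    have := natDegree_le_of_dvd h2 X_ne_zero
    simp at this

lemma su3Poly_irreducible : Irreducible su3Poly :=
  su3Poly_eisenstein.irreducible
    (Ideal.span_singleton_prime X_ne_zero |>.mpr prime_X)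
    su3Poly_monic.isPrimitive
    (by rw [su3Poly_natDegree]; norm_num)

/-- The polynomial `X³ - 3qX - (q + q²)` is irreducible over the field `ℂ(q)` of
rational functions in one indeterminate `q` over `ℂ`. -/
theorem dual_poly_irreducible_su3 :
    Irreducible (Polynomial.X ^ 3 - Polynomial.C (3 * RatFunc.X) * Polynomial.X
      - Polynomial.C (RatFunc.X + RatFunc.X ^ 2) : Polynomial (RatFunc ℂ)) := by
  have h := (su3Poly_monic.irreducible_iff_irreducible_map_fraction_map
    (K := RatFunc ℂ)).mp su3Poly_irreducible
  have heq : su3Poly.map (algebraMap (Polynomial ℂ) (RatFunc ℂ)) =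
      (Polynomial.X ^ 3 - Polynomial.C (3 * RatFunc.X) * Polynomial.X
        - Polynomial.C (RatFunc.X + RatFunc.X ^ 2)) := by
    simp [su3Poly, Polynomial.map_sub, Polynomial.map_pow, Polynomial.map_mul,
      map_C, map_X, RatFunc.algebraMap_X, map_ofNat]
  rwa [heq] at h
end

section
/- The polynomial X³ + μm·X² + μ³q is irreducible in ℂ(μ,m,q)[X], where ℂ(μ,m,q) is the field of rational functions in three independent indeterminates μ, m, q over ℂ. -/
open MvPolynomial Polynomial

namespace MesonAux

noncomputable abbrev R := MvPolynomial (Fin 3) ℂ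

/-- retraction killing variables 1 and 2 -/
noncomputable def ρ : R →ₐ[ℂ] R :=
  MvPolynomial.aeval (fun i => if i = 0 then MvPolynomial.X 0 else 0)

/-- scaling variables 1 and 2 by a new variable `X` -/
noncomputable def ψ : R →ₐ[ℂ] Polynomial R :=
  MvPolynomial.aeval (fun i => if i = 0 then Polynomial.C (MvPolynomial.X 0)
    else Polynomial.C (MvPolynomial.X i) * Polynomial.X)

noncomputable def 𝓟 : Ideal R :=
  Ideal.span {MvPolynomial.X 1, MvPolynomial.X 2}

lemma X1_mem : MvPolynomial.X (1 : Fin 3) ∈ 𝓟 :=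
  Ideal.subset_span (by simp [Set.mem_insert_iff])

lemma X2_mem : MvPolynomial.X (2 : Fin 3) ∈ 𝓟 :=
  Ideal.subset_span (by simp [Set.mem_insert_iff])

lemma sub_rho_mem (x : R) : x - ρ x ∈ 𝓟 := by
  induction x using MvPolynomial.induction_on with
  | C a => simp [ρ]
  | add p q hp hq =>
      have := Ideal.add_mem _ hp hq
      simpa [sub_add_sub_comm] using this
  | mul_X p i hp =>
      fin_cases i
      · show p * MvPolynomial.X 0 - ρ (p * MvPolynomial.X 0) ∈ 𝓟
        have h : p * MvPolynomial.X 0 - ρ (p * MvPolynomial.X 0)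
            = (p - ρ p) * MvPolynomial.X 0 := by
          simp [ρ, sub_mul]
        rw [h]
        exact Ideal.mul_mem_right _ _ hp
      · show p * MvPolynomial.X 1 - ρ (p * MvPolynomial.X 1) ∈ 𝓟
        have h : p * MvPolynomial.X 1 - ρ (p * MvPolynomial.X 1)
            = p * MvPolynomial.X 1 := by simp [ρ]
        rw [h]
        exact Ideal.mul_mem_left _ _ X1_mem
      · show p * MvPolynomial.X 2 - ρ (p * MvPolynomial.X 2) ∈ 𝓟
        have h : p * MvPolynomial.X 2 - ρ (p * MvPolynomial.X 2)
            = p * MvPolynomial.X 2 := by simp [ρ]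
        rw [h]
        exact Ideal.mul_mem_left _ _ X2_mem

lemma P_eq_ker : 𝓟 = RingHom.ker (ρ.toRingHom) := by
  apply le_antisymm
  · rw [𝓟, Ideal.span_le]
    rintro x (rfl | rfl) <;> simp [RingHom.mem_ker, ρ]
  · intro x hx
    rw [RingHom.mem_ker] at hx
    have h := sub_rho_mem x
    rw [show ρ.toRingHom x = ρ x from rfl] at hx
    rwa [hx, sub_zero] at h

lemma P_isPrime : 𝓟.IsPrime := by
  rw [P_eq_ker]; exact RingHom.ker_isPrime _

lemma psi_X1 : ψ (MvPolynomial.X 1) = Polynomial.C (MvPolynomial.X 1) * Polynomial.X := by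
  simp [ψ]

lemma psi_X2 : ψ (MvPolynomial.X 2) = Polynomial.C (MvPolynomial.X 2) * Polynomial.X := by
  simp [ψ]

lemma map_psi_P_le : Ideal.map ψ.toRingHom 𝓟 ≤ Ideal.span {(Polynomial.X : Polynomial R)} := by
  rw [𝓟, Ideal.map_span, Ideal.span_le]
  rintro y ⟨x, (rfl | rfl), rfl⟩
  · rw [show ψ.toRingHom (MvPolynomial.X 1) = _ from psi_X1]
    exact Ideal.mem_span_singleton.2 (dvd_mul_left _ _)
  · rw [show ψ.toRingHom (MvPolynomial.X 2) = _ from psi_X2]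
    exact Ideal.mem_span_singleton.2 (dvd_mul_left _ _)

lemma const_not_mem_sq :
    MvPolynomial.X 0 ^ 3 * MvPolynomial.X 2 ∉ 𝓟 ^ 2 := by
  intro h
  have h2 : ψ (MvPolynomial.X 0 ^ 3 * MvPolynomial.X 2) ∈
      Ideal.span {(Polynomial.X : Polynomial R)} ^ 2 := by
    have := Ideal.mem_map_of_mem ψ.toRingHom h
    rw [Ideal.map_pow] at this
    exact Ideal.pow_right_mono map_psi_P_le 2 this
  rw [Ideal.span_singleton_pow, Ideal.mem_span_singleton] at h2
  have hψ : ψ (MvPolynomial.X 0 ^ 3 * MvPolynomial.X 2)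
      = Polynomial.C (MvPolynomial.X 0 ^ 3 * MvPolynomial.X 2) * Polynomial.X := by
    simp [ψ, mul_assoc]
  rw [hψ, pow_two] at h2
  -- h2 : X * X ∣ C c * X
  have hX : (Polynomial.X : Polynomial R) ∣
      Polynomial.C (MvPolynomial.X 0 ^ 3 * MvPolynomial.X 2) :=
    (mul_dvd_mul_iff_right (Polynomial.X_ne_zero (R := R))).1 h2
  rw [Polynomial.X_dvd_iff, Polynomial.coeff_C_zero] at hX
  exact mul_ne_zero (pow_ne_zero _ (MvPolynomial.X_ne_zero _))
    (MvPolynomial.X_ne_zero _) hX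

noncomputable def f : Polynomial R :=
  Polynomial.X ^ 3 + Polynomial.C (MvPolynomial.X 0 * MvPolynomial.X 1) * Polynomial.X ^ 2
    + Polynomial.C (MvPolynomial.X 0 ^ 3 * MvPolynomial.X 2)

lemma tail_degree_lt :
    ((Polynomial.C (MvPolynomial.X 0 * MvPolynomial.X 1) * Polynomial.X ^ 2
      + Polynomial.C (MvPolynomial.X 0 ^ 3 * MvPolynomial.X 2) : Polynomial R)).degree
      < ((3 : ℕ) : WithBot ℕ) := by
  apply lt_of_le_of_lt (Polynomial.degree_add_le _ _)
  rw [max_lt_iff]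
  constructor
  · apply lt_of_le_of_lt (Polynomial.degree_C_mul_X_pow_le _ _)
    exact_mod_cast by norm_num
  · exact lt_of_le_of_lt Polynomial.degree_C_le (by exact_mod_cast by norm_num)

lemma f_eq : f = Polynomial.X ^ 3 +
    (Polynomial.C (MvPolynomial.X 0 * MvPolynomial.X 1) * Polynomial.X ^ 2
      + Polynomial.C (MvPolynomial.X 0 ^ 3 * MvPolynomial.X 2)) := by
  rw [f, add_assoc]

lemma f_monic : f.Monic := by
  rw [f_eq]
  exact Polynomial.monic_X_pow_add tail_degree_lt

lemma f_natDegree : f.natDegree = 3 := by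
  rw [f_eq, Polynomial.natDegree_add_eq_left_of_degree_lt]
  · simp
  · rw [Polynomial.degree_X_pow]
    exact tail_degree_lt

lemma f_coeff0 : f.coeff 0 = MvPolynomial.X 0 ^ 3 * MvPolynomial.X 2 := by
  simp only [f, Polynomial.coeff_add, Polynomial.coeff_C_mul, Polynomial.coeff_X_pow,
    Polynomial.coeff_C]
  norm_num

lemma f_coeff1 : f.coeff 1 = 0 := by
  simp only [f, Polynomial.coeff_add, Polynomial.coeff_C_mul, Polynomial.coeff_X_pow,
    Polynomial.coeff_C]
  norm_num

lemma f_coeff2 : f.coeff 2 = MvPolynomial.X 0 * MvPolynomial.X 1 := by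
  simp only [f, Polynomial.coeff_add, Polynomial.coeff_C_mul, Polynomial.coeff_X_pow,
    Polynomial.coeff_C]
  norm_num

lemma f_eisenstein : f.IsEisensteinAt 𝓟 := by
  constructor
  · rw [f_monic.leadingCoeff]
    intro h
    exact P_isPrime.ne_top (Ideal.eq_top_of_isUnit_mem _ h isUnit_one)
  · intro n hn
    rw [f_natDegree] at hn
    interval_cases n
    · rw [f_coeff0]; exact Ideal.mul_mem_left _ _ X2_mem
    · rw [f_coeff1]; exact Ideal.zero_mem _
    · rw [f_coeff2]; exact Ideal.mul_mem_left _ _ X1_mem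
  · rw [f_coeff0]; exact const_not_mem_sq

lemma f_irreducible : Irreducible f :=
  f_eisenstein.irreducible P_isPrime f_monic.isPrimitive (by rw [f_natDegree]; norm_num)

end MesonAux

set_option maxHeartbeats 1000000 in
set_option synthInstance.maxHeartbeats 200000 in
/-- The polynomial `X³ + μm·X² + μ³q` is irreducible over the field `ℂ(μ,m,q)`
of rational functions in three independent indeterminates `μ, m, q` over `ℂ`
(realized as the fraction field of `ℂ[μ,m,q]`). -/
theorem meson_poly_irreducible_U2 :
    let R := MvPolynomial (Fin 3) ℂ
    let K := FractionRing R
    let μ : K := algebraMap R K (MvPolynomial.X 0)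
    let m : K := algebraMap R K (MvPolynomial.X 1)
    let q : K := algebraMap R K (MvPolynomial.X 2)
    Irreducible (Polynomial.X ^ 3 + Polynomial.C (μ * m) * Polynomial.X ^ 2
      + Polynomial.C (μ ^ 3 * q) : Polynomial K) := by
  intro R K μ m q
  have h := (MesonAux.f_monic.irreducible_iff_irreducible_map_fraction_map (K := K)).1
    MesonAux.f_irreducible
  have hmap : MesonAux.f.map (algebraMap R K)
      = Polynomial.X ^ 3 + Polynomial.C (μ * m) * Polynomial.X ^ 2
        + Polynomial.C (μ ^ 3 * q) := by
    rw [MesonAux.f]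
    rw [Polynomial.map_add, Polynomial.map_add, Polynomial.map_pow, Polynomial.map_mul,
      Polynomial.map_pow, Polynomial.map_X, Polynomial.map_C, Polynomial.map_C]
    simp only [map_mul, map_pow]
    rfl
  rwa [hmap] at h
end

section
/- The polynomial X³ + μ²mq·X + μ³q² is irreducible in ℂ(μ,m,q)[X], where ℂ(μ,m,q) is the field of rational functions in three independent indeterminates μ, m, q over ℂ. -/
open Polynomial in
lemma mv_prime_X (i : Fin 3) : Prime (MvPolynomial.X i : MvPolynomial (Fin 3) ℂ) := by
  have h0 : Prime (MvPolynomial.X 0 : MvPolynomial (Fin 3) ℂ) := by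
    rw [← MulEquiv.prime_iff (MvPolynomial.finSuccEquiv ℂ 2).toMulEquiv]
    simpa [MvPolynomial.finSuccEquiv_X_zero] using
      (Polynomial.prime_X (R := MvPolynomial (Fin 2) ℂ))
  have := MulEquiv.prime_iff (MvPolynomial.renameEquiv ℂ (Equiv.swap (0 : Fin 3) i)).toMulEquiv
    (p := (MvPolynomial.X 0 : MvPolynomial (Fin 3) ℂ))
  rw [← this] at h0
  simpa using h0

-- no root in R
lemma no_root_in_R (r : MvPolynomial (Fin 3) ℂ)
    (hr : r ^ 3 + (MvPolynomial.X 0) ^ 2 * MvPolynomial.X 1 * MvPolynomial.X 2 * r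
      + (MvPolynomial.X 0) ^ 3 * (MvPolynomial.X 2) ^ 2 = 0) : False := by
  classical
  set X0 : MvPolynomial (Fin 3) ℂ := MvPolynomial.X 0
  set X1 : MvPolynomial (Fin 3) ℂ := MvPolynomial.X 1
  set X2 : MvPolynomial (Fin 3) ℂ := MvPolynomial.X 2
  have hdvd : X2 ∣ r ^ 3 := ⟨-(X0 ^ 2 * X1 * r + X0 ^ 3 * X2), by linear_combination hr⟩
  obtain ⟨s, rfl⟩ := (mv_prime_X 2).dvd_of_dvd_pow hdvd
  have h2 : X2 ^ 2 * (X2 * s ^ 3 + X0 ^ 2 * X1 * s + X0 ^ 3) = 0 := by linear_combination hr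
  have hX2 : X2 ^ 2 ≠ 0 := pow_ne_zero _ (MvPolynomial.X_ne_zero _)
  have heq : X2 * s ^ 3 + X0 ^ 2 * X1 * s + X0 ^ 3 = 0 := by
    rcases mul_eq_zero.mp h2 with h | h
    · exact absurd h hX2
    · exact h
  -- send X2 to 0
  set φ : MvPolynomial (Fin 3) ℂ →ₐ[ℂ] MvPolynomial (Fin 3) ℂ :=
    MvPolynomial.aeval ![MvPolynomial.X 0, MvPolynomial.X 1, 0]
  have hφ := congrArg φ heq
  simp only [map_add, map_mul, map_pow, map_zero, MvPolynomial.aeval_X, φ, X0, X1, X2] at hφ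
  norm_num at hφ
  -- hφ : X0 ^ 2 * X1 * φ s + X0 ^ 3 = 0 (hopefully)
  set t : MvPolynomial (Fin 3) ℂ := (MvPolynomial.bind₁ ![MvPolynomial.X 0, MvPolynomial.X 1, 0]) s with ht
  have h3 : (MvPolynomial.X 0 : MvPolynomial (Fin 3) ℂ) ^ 2
      * (MvPolynomial.X 1 * t + MvPolynomial.X 0) = 0 := by simp only [Matrix.cons_val] at hφ; linear_combination hφ
  have heq2 : (MvPolynomial.X 1 : MvPolynomial (Fin 3) ℂ) * t + MvPolynomial.X 0 = 0 := by
    rcases mul_eq_zero.mp h3 with h | h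
    · exact absurd h (pow_ne_zero _ (MvPolynomial.X_ne_zero _))
    · exact h
  set ψ : MvPolynomial (Fin 3) ℂ →ₐ[ℂ] MvPolynomial (Fin 3) ℂ :=
    MvPolynomial.aeval ![MvPolynomial.X 0, 0, MvPolynomial.X 2]
  have hψ := congrArg ψ heq2
  simp only [map_add, map_mul, map_zero, MvPolynomial.aeval_X, ψ] at hψ
  norm_num at hψ


/-- The polynomial `X³ + μ²mq·X + μ³q²` is irreducible over the field `ℂ(μ,m,q)`
of rational functions in three independent indeterminates `μ, m, q` over `ℂ`.
This implies that the confining and Higgs vacua of the U(2) theory with one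
flavor are in the same phase. -/
theorem glueball_poly_irreducible_U2 :
    let R := MvPolynomial (Fin 3) ℂ
    let K := FractionRing R
    let μ : K := algebraMap R K (MvPolynomial.X 0)
    let m : K := algebraMap R K (MvPolynomial.X 1)
    let q : K := algebraMap R K (MvPolynomial.X 2)
    Irreducible (Polynomial.X ^ 3 + Polynomial.C (μ ^ 2 * m * q) * Polynomial.X
      + Polynomial.C (μ ^ 3 * q ^ 2) : Polynomial K) := by
  intro R K μ m q
  set a : K := μ ^ 2 * m * q with ha
  set b : K := μ ^ 3 * q ^ 2 with hb
  set p : Polynomial K := Polynomial.X ^ 3 + Polynomial.C a * Polynomial.X + Polynomial.C b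
    with hpdef
  have hp : p = Polynomial.X ^ 3 + (Polynomial.C a * Polynomial.X + Polynomial.C b) := by
    rw [hpdef]; ring
  have hdlt : (Polynomial.C a * Polynomial.X + Polynomial.C b).degree < ((3 : ℕ) : WithBot ℕ) :=
    lt_of_le_of_lt Polynomial.degree_linear_le (by norm_num)
  have hmon : p.Monic := by rw [hp]; exact Polynomial.monic_X_pow_add hdlt
  have hdeg : p.natDegree = 3 := by
    rw [hp]
    have : (Polynomial.X ^ 3 + (Polynomial.C a * Polynomial.X + Polynomial.C b)
        : Polynomial K).degree = 3 := by
      rw [Polynomial.degree_add_eq_left_of_degree_lt (by simpa using hdlt),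
        Polynomial.degree_X_pow]
      norm_num
    exact Polynomial.natDegree_eq_of_degree_eq_some this
  rw [hmon.irreducible_iff_roots_eq_zero_of_degree_le_three (by omega) (by omega)]
  rw [Multiset.eq_zero_iff_forall_notMem]
  intro x hx
  rw [Polynomial.mem_roots hmon.ne_zero] at hx
  have hx' : x ^ 3 + a * x + b = 0 := by
    have := hx
    simpa [hpdef, Polynomial.IsRoot] using this
  -- x is integral over R
  set P : Polynomial R := Polynomial.X ^ 3
    + Polynomial.C ((MvPolynomial.X 0) ^ 2 * MvPolynomial.X 1 * MvPolynomial.X 2) * Polynomial.X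
    + Polynomial.C ((MvPolynomial.X 0) ^ 3 * (MvPolynomial.X 2) ^ 2) with hPdef
  have hPmon : P.Monic := by
    have : P = Polynomial.X ^ 3 + (Polynomial.C ((MvPolynomial.X 0) ^ 2 * MvPolynomial.X 1
        * MvPolynomial.X 2) * Polynomial.X
        + Polynomial.C ((MvPolynomial.X 0) ^ 3 * (MvPolynomial.X 2) ^ 2)) := by
      rw [hPdef]; ring
    rw [this]
    exact Polynomial.monic_X_pow_add
      (lt_of_le_of_lt Polynomial.degree_linear_le (by norm_num))
  have hint : IsIntegral R x := by
    refine ⟨P, hPmon, ?_⟩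
    have : Polynomial.eval₂ (algebraMap R K) x P = x ^ 3 + a * x + b := by
      simp [hPdef, ha, hb, map_mul, map_pow, μ, m, q]
    rw [this, hx']
  obtain ⟨r, hr⟩ := IsIntegrallyClosed.isIntegral_iff.mp hint
  have h0 : algebraMap R K (r ^ 3 + (MvPolynomial.X 0) ^ 2 * MvPolynomial.X 1
      * MvPolynomial.X 2 * r + (MvPolynomial.X 0) ^ 3 * (MvPolynomial.X 2) ^ 2) = 0 := by
    simp only [map_add, map_mul, map_pow, hr]
    exact hx'
  exact no_root_in_R r ((map_eq_zero_iff _ (IsFractionRing.injective R K)).mp h0)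
end

section
/- Let n ≥ 1 and let h₁,…,h_n ∈ ℂ. Define the Newton sums N_j = Σ_{i=1}^{n} h_i^j for j ≥ 0 (so N₀ = n). Then for every integer k with 0 ≤ k ≤ n−1, the determinant of the (n−k)×(n−k) Hermite matrix H^{(k)} = (N_{i+j−2})_{1≤i,j≤n−k} equals Σ_I Π_{i<j, i,j∈I} (h_i − h_j)², where the sum runs over the C(n,k) subsets I ⊆ {1,…,n} of cardinality n−k. -/
open Finset Matrix Equiv

local notation "ε " σ:max => ((Equiv.Perm.sign σ : ℤ) : ℂ)

private lemma cb_vanish {m n : ℕ} (A : Matrix (Fin m) (Fin n) ℂ) (B : Matrix (Fin n) (Fin m) ℂ)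
    {p : Fin m → Fin n} (H : ¬Function.Injective p) :
    (∑ σ : Perm (Fin m), ε σ * ∏ x, A (σ x) (p x) * B (p x) x) = 0 := by
  obtain ⟨i, j, hpij, hij⟩ : ∃ i j, p i = p j ∧ i ≠ j := by
    rw [Function.Injective] at H
    push_neg at H
    obtain ⟨i, j, h1, h2⟩ := H
    exact ⟨i, j, h1, h2⟩
  exact Finset.sum_involution (fun σ _ => σ * Equiv.swap i j)
    (fun σ _ => by
      have : (∏ x, A (σ x) (p x)) = ∏ x, A ((σ * Equiv.swap i j) x) (p x) :=
        Fintype.prod_equiv (Equiv.swap i j) _ _ (by simp [Equiv.apply_swap_eq_self hpij])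
      simp [this, Equiv.Perm.sign_swap hij, -Equiv.Perm.sign_swap', Finset.prod_mul_distrib])
    (fun σ _ _ => (not_congr Equiv.mul_swap_eq_iff).mpr hij) (fun _ _ => Finset.mem_univ _)
    fun σ _ => Equiv.mul_swap_involutive i j σ

private lemma sum_perm_det {m : ℕ} (M N : Matrix (Fin m) (Fin m) ℂ) :
    ∑ τ : Perm (Fin m), ∑ σ : Perm (Fin m), ε σ * ∏ i, M (σ i) (τ i) * N (τ i) i
      = M.det * N.det :=
  calc
    ∑ τ : Perm (Fin m), ∑ σ : Perm (Fin m), ε σ * ∏ i, M (σ i) (τ i) * N (τ i) i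
    _ = ∑ σ : Perm (Fin m), ∑ τ : Perm (Fin m),
          (∏ i, N (σ i) i) * ε τ * ∏ j, M (τ j) (σ j) := by
      simp only [mul_comm, mul_left_comm, prod_mul_distrib, mul_assoc]
    _ = ∑ σ : Perm (Fin m), ∑ τ : Perm (Fin m),
          (∏ i, N (σ i) i) * (ε σ * ε τ) * ∏ i, M (τ i) i :=
      (Finset.sum_congr rfl fun σ _ =>
        Fintype.sum_equiv (Equiv.mulRight σ⁻¹) _ _ fun τ => by
          have : (∏ j, M (τ j) (σ j)) = ∏ j, M ((τ * σ⁻¹) j) j := by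
            rw [← (σ⁻¹ : _ ≃ _).prod_comp]
            simp only [Equiv.Perm.coe_mul, Equiv.Perm.coe_inv, Equiv.apply_symm_apply, Function.comp_apply]
          have h : ε σ * ε (τ * σ⁻¹) = ε τ :=
            calc
              ε σ * ε (τ * σ⁻¹) = ε (τ * σ⁻¹ * σ) := by
                rw [mul_comm, Equiv.Perm.sign_mul (τ * σ⁻¹)]
                simp only [Int.cast_mul, Units.val_mul]
              _ = ε τ := by simp only [inv_mul_cancel_right]
          simp_rw [Equiv.coe_mulRight, h]
          simp only [this])
    _ = M.det * N.det := by
      simp only [det_apply', Finset.mul_sum, mul_comm, mul_left_comm, mul_assoc]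

example : True := trivial

section sorting
variable {m n : ℕ}

private lemma card_image_of_inj {p : Fin m → Fin n} (hp : Function.Injective p) :
    (Finset.image p Finset.univ).card = m := by
  rw [Finset.card_image_of_injective _ hp, Finset.card_univ, Fintype.card_fin]

private noncomputable def sortOf (p : Fin m → Fin n) (hp : Function.Injective p) :
    Fin m → Fin n :=
  (Finset.image p Finset.univ).orderEmbOfFin (card_image_of_inj hp)

private lemma sortOf_strictMono (p : Fin m → Fin n) (hp : Function.Injective p) :
    StrictMono (sortOf p hp) :=
  ((Finset.image p Finset.univ).orderEmbOfFin (card_image_of_inj hp)).strictMono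

private noncomputable def permOf (p : Fin m → Fin n) (hp : Function.Injective p) :
    Perm (Fin m) :=
  Equiv.ofBijective
    (fun i => ((Finset.image p Finset.univ).orderIsoOfFin (card_image_of_inj hp)).symm
      ⟨p i, Finset.mem_image_of_mem p (Finset.mem_univ i)⟩)
    (Finite.injective_iff_bijective.mp (fun a b hab => by
      apply hp
      have := ((Finset.image p Finset.univ).orderIsoOfFin
        (card_image_of_inj hp)).symm.injective hab
      exact congrArg Subtype.val this))

private lemma sortOf_permOf (p : Fin m → Fin n) (hp : Function.Injective p) (i : Fin m) :
    sortOf p hp (permOf p hp i) = p i := by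
  simp [sortOf, permOf, Finset.orderEmbOfFin, Equiv.ofBijective]

private lemma image_comp_perm (g : Fin m → Fin n) (τ : Perm (Fin m)) :
    Finset.image (g ∘ τ) Finset.univ = Finset.image g Finset.univ := by
  ext x
  simp only [Finset.mem_image, Finset.mem_univ, true_and, Function.comp_apply]
  exact ⟨fun ⟨a, ha⟩ => ⟨τ a, ha⟩, fun ⟨a, ha⟩ => ⟨τ.symm a, by simpa using ha⟩⟩

private lemma sortOf_comp_perm (g : Fin m → Fin n) (hg : StrictMono g) (τ : Perm (Fin m)) :
    sortOf (g ∘ τ) (hg.injective.comp τ.injective) = g := by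
  refine (Finset.orderEmbOfFin_unique (card_image_of_inj (hg.injective.comp τ.injective))
    (fun i => ?_) hg).symm
  rw [image_comp_perm]
  exact Finset.mem_image_of_mem g (Finset.mem_univ i)

private lemma permOf_comp_perm (g : Fin m → Fin n) (hg : StrictMono g) (τ : Perm (Fin m)) :
    permOf (g ∘ τ) (hg.injective.comp τ.injective) = τ := by
  apply Equiv.ext
  intro i
  have key : sortOf (g ∘ τ) (hg.injective.comp τ.injective)
      (permOf (g ∘ τ) (hg.injective.comp τ.injective) i) = g (τ i) :=
    sortOf_permOf _ _ i
  rw [sortOf_comp_perm g hg τ] at key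
  exact hg.injective key

end sorting

example : True := trivial

private lemma cauchy_binet {m n : ℕ} (A : Matrix (Fin m) (Fin n) ℂ) (B : Matrix (Fin n) (Fin m) ℂ) :
    (A * B).det = ∑ p ∈ Finset.univ.filter (fun p : Fin m → Fin n => StrictMono p),
      (A.submatrix id p).det * (B.submatrix p id).det :=
  calc
    (A * B).det
    _ = ∑ p : Fin m → Fin n, ∑ σ : Perm (Fin m), ε σ * ∏ i, A (σ i) (p i) * B (p i) i := by
      simp only [det_apply', mul_apply, prod_univ_sum, mul_sum, Fintype.piFinset_univ]
      rw [Finset.sum_comm]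
    _ = ∑ p ∈ Finset.univ.filter (fun p : Fin m → Fin n => Function.Injective p),
          ∑ σ : Perm (Fin m), ε σ * ∏ i, A (σ i) (p i) * B (p i) i := by
      refine (Finset.sum_subset (Finset.filter_subset _ _) fun p _ hp => cb_vanish A B ?_).symm
      simpa only [true_and, Finset.mem_filter, Finset.mem_univ] using hp
    _ = ∑ x ∈ (Finset.univ.filter (fun g : Fin m → Fin n => StrictMono g)) ×ˢ
          (Finset.univ : Finset (Perm (Fin m))),
          ∑ σ : Perm (Fin m), ε σ * ∏ i, A (σ i) ((x.1 ∘ x.2) i) * B ((x.1 ∘ x.2) i) i := by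
      refine Finset.sum_bij'
        (fun p hp => (sortOf p (by simpa using hp), permOf p (by simpa using hp)))
        (fun x hx => x.1 ∘ x.2) ?_ ?_ ?_ ?_ ?_
      · intro p hp
        simp only [Finset.mem_product, Finset.mem_filter, Finset.mem_univ, true_and]
        exact ⟨sortOf_strictMono p _, trivial⟩
      · intro x hx
        simp only [Finset.mem_product, Finset.mem_filter, Finset.mem_univ, true_and] at hx ⊢
        exact hx.1.injective.comp x.2.injective
      · intro p hp
        funext i
        exact sortOf_permOf p (by simpa using hp) i
      · intro x hx
        simp only [Finset.mem_product, Finset.mem_filter, Finset.mem_univ, true_and] at hx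
        have h1 := sortOf_comp_perm x.1 hx.1 x.2
        have h2 := permOf_comp_perm x.1 hx.1 x.2
        exact Prod.ext (by convert h1) (by convert h2)
      · intro p hp
        simp only [Function.comp_apply]
        congr 1
        funext σ
        congr 1
        apply Finset.prod_congr rfl
        intro i _
        rw [sortOf_permOf p (by simpa using hp) i]
    _ = ∑ g ∈ Finset.univ.filter (fun g : Fin m → Fin n => StrictMono g), ∑ τ : Perm (Fin m),
          ∑ σ : Perm (Fin m), ε σ * ∏ i, A (σ i) (g (τ i)) * B (g (τ i)) i := by
      rw [Finset.sum_product]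
      rfl
    _ = ∑ p ∈ Finset.univ.filter (fun p : Fin m → Fin n => StrictMono p),
        (A.submatrix id p).det * (B.submatrix p id).det := by
      refine Finset.sum_congr rfl fun g _ => ?_
      exact sum_perm_det (A.submatrix id g) (B.submatrix g id)

/-- Subdiscriminants as determinants of Hermite matrices.  For `h₁, …, h_n ∈ ℂ`
with Newton sums `N_j = Σ_i h_i^j`, and `0 ≤ k ≤ n - 1`, the determinant of the
`(n-k) × (n-k)` Hermite matrix `(N_{i+j-2})_{1 ≤ i,j ≤ n-k}` equals the sum,
over the subsets `I ⊆ {1, …, n}` of cardinality `n - k`, of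
`Π_{i<j ∈ I} (h_i - h_j)²`. -/
theorem hermite_det_eq_subdiscriminant (n : ℕ) (hn : 1 ≤ n) (h : Fin n → ℂ)
    (k : ℕ) (hk : k ≤ n - 1) :
    Matrix.det (Matrix.of fun i j : Fin (n - k) => ∑ l : Fin n, h l ^ ((i : ℕ) + (j : ℕ)))
      = ∑ I ∈ Finset.powersetCard (n - k) (Finset.univ : Finset (Fin n)),
          ∏ i ∈ I, ∏ j ∈ I.filter (fun j => i < j), (h i - h j) ^ 2 := by
  set m := n - k with hm
  have key : (Matrix.of fun i j : Fin m => ∑ l : Fin n, h l ^ ((i : ℕ) + (j : ℕ)))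
      = (Matrix.of fun (i : Fin m) (l : Fin n) => h l ^ (i : ℕ)) *
        (Matrix.of fun (l : Fin n) (j : Fin m) => h l ^ (j : ℕ)) := by
    ext i j
    simp [Matrix.mul_apply, pow_add]
  rw [key, cauchy_binet]
  refine Finset.sum_bij' (fun p _ => Finset.image p Finset.univ)
    (fun I hI => ⇑(I.orderEmbOfFin (Finset.mem_powersetCard_univ.mp hI))) ?_ ?_ ?_ ?_ ?_
  · intro p hp
    simp only [Finset.mem_filter, Finset.mem_univ, true_and] at hp
    exact Finset.mem_powersetCard_univ.mpr (card_image_of_inj hp.injective)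
  · intro I hI
    simp only [Finset.mem_filter, Finset.mem_univ, true_and]
    exact (I.orderEmbOfFin (Finset.mem_powersetCard_univ.mp hI)).strictMono
  · intro p hp
    simp only [Finset.mem_filter, Finset.mem_univ, true_and] at hp
    exact (Finset.orderEmbOfFin_unique (card_image_of_inj hp.injective)
      (fun i => Finset.mem_image_of_mem p (Finset.mem_univ i)) hp).symm
  · intro I hI
    apply Finset.coe_injective
    rw [Finset.coe_image, Finset.coe_univ, Set.image_univ, Finset.range_orderEmbOfFin]
  · intro p hp
    simp only [Finset.mem_filter, Finset.mem_univ, true_and] at hp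
    have hA : (Matrix.of fun (i : Fin m) (l : Fin n) => h l ^ (i : ℕ)).submatrix id p
        = (Matrix.vandermonde (fun i => h (p i)))ᵀ := by
      ext i j; rfl
    have hB : (Matrix.of fun (l : Fin n) (j : Fin m) => h l ^ (j : ℕ)).submatrix p id
        = Matrix.vandermonde (fun i => h (p i)) := by
      ext i j; rfl
    rw [hA, hB, Matrix.det_transpose, Matrix.det_vandermonde, ← Finset.prod_mul_distrib]
    rw [Finset.prod_image (fun a _ b _ hab => hp.injective hab)]
    refine Finset.prod_congr rfl fun i _ => ?_
    rw [Finset.filter_image, Finset.prod_image (fun a _ b _ hab => hp.injective hab),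
      ← Finset.prod_mul_distrib]
    have hfilt : (Finset.univ.filter fun j => p i < p j) = Finset.Ioi i := by
      ext j
      simp [hp.lt_iff_lt]
    rw [hfilt]
    refine Finset.prod_congr rfl fun j _ => ?_
    ring
end

section
/- Let n ≥ 2 and h₁,…,h_n ∈ ℂ, and for 0 ≤ k ≤ n−1 define the k-th subdiscriminant Δ^{(k)} = Σ_{I⊆{1,…,n}, |I|=n−k} Π_{i<j, i,j∈I} (h_i − h_j)². Then for every integer p with 1 ≤ p ≤ n−1, the conditions Δ^{(0)} = Δ^{(1)} = ⋯ = Δ^{(p−1)} = 0 hold if and only if the number of distinct values among h₁,…,h_n is at most n − p (equivalently, the monic polynomial Π_{i=1}^{n}(X − h_i) has at least p double roots, where a root of multiplicity m is counted as m−1 double roots). -/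
open Finset

namespace SubdiscAux

/-- Symmetric square-difference function on unordered pairs. -/
noncomputable def sqd : Sym2 ℂ → ℂ := Sym2.lift ⟨fun a b => (a - b) ^ 2, by intro a b; ring⟩

@[simp] lemma sqd_mk (a b : ℂ) : sqd s(a, b) = (a - b) ^ 2 := rfl

variable {n : ℕ} (h : Fin n → ℂ)

/-- The term of the subdiscriminant sum for a subset `I`. -/
noncomputable def term (I : Finset (Fin n)) : ℂ :=
  ∏ i ∈ I, ∏ j ∈ I.filter (fun j => i < j), (h i - h j) ^ 2

lemma term_flat (I : Finset (Fin n)) :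
    term h I = ∏ q ∈ (I ×ˢ I).filter (fun q => q.1 < q.2), (h q.1 - h q.2) ^ 2 := by
  rw [term]
  simp only [Finset.prod_filter]
  exact (Finset.prod_product' (s := I) (t := I) (f := fun i j => if i < j then (h i - h j) ^ 2 else 1)).symm

lemma term_eq_zero (I : Finset (Fin n)) (hni : ¬ Set.InjOn h I) : term h I = 0 := by
  simp only [Set.InjOn, not_forall] at hni
  obtain ⟨i, hi, j, hj, hij, hne⟩ := hni
  rw [Finset.mem_coe] at hi hj
  rw [term_flat]
  rcases lt_or_gt_of_ne hne with hlt | hgt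
  · refine Finset.prod_eq_zero (i := (i, j)) ?_ ?_
    · simp [Finset.mem_filter, hi, hj, hlt]
    · simp [hij]
  · refine Finset.prod_eq_zero (i := (j, i)) ?_ ?_
    · simp [Finset.mem_filter, hi, hj, hgt]
    · simp [hij.symm]

lemma term_eq_const (I : Finset (Fin n)) (hinj : Set.InjOn h I)
    (him : I.image h = Finset.univ.image h) :
    term h I =
      ∏ q ∈ ((Finset.univ.image h).offDiag.image fun q => s(q.1, q.2)), sqd q := by
  rw [term_flat]
  refine Finset.prod_bij (fun q _ => s(h q.1, h q.2)) ?_ ?_ ?_ ?_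
  · rintro ⟨i, j⟩ hq
    simp only [Finset.mem_filter, Finset.mem_product] at hq
    obtain ⟨⟨hi, hj⟩, hlt⟩ := hq
    refine Finset.mem_image.2 ⟨(h i, h j), ?_, rfl⟩
    refine Finset.mem_offDiag.2 ⟨?_, ?_, ?_⟩
    · rw [← him]; exact Finset.mem_image_of_mem h hi
    · rw [← him]; exact Finset.mem_image_of_mem h hj
    · exact fun he => (ne_of_lt hlt) (hinj hi hj he)
  · rintro ⟨i, j⟩ hq ⟨i', j'⟩ hq' heq
    simp only [Finset.mem_filter, Finset.mem_product] at hq hq'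
    obtain ⟨⟨hi, hj⟩, hlt⟩ := hq
    obtain ⟨⟨hi', hj'⟩, hlt'⟩ := hq'
    rw [Sym2.eq_iff] at heq
    rcases heq with ⟨h1, h2⟩ | ⟨h1, h2⟩
    · have e1 : i = i' := hinj hi hi' h1
      have e2 : j = j' := hinj hj hj' h2
      simp [e1, e2]
    · have e1 : i = j' := hinj hi hj' h1
      have e2 : j = i' := hinj hj hi' h2
      exfalso; rw [e1, e2] at hlt; exact absurd (hlt.trans hlt') (lt_irrefl _)
  · intro q hq
    obtain ⟨⟨a, b⟩, hab, rfl⟩ := Finset.mem_image.1 hq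
    obtain ⟨ha, hb, hne⟩ := Finset.mem_offDiag.1 hab
    rw [← him] at ha hb
    obtain ⟨i, hi, hia⟩ := Finset.mem_image.1 ha
    obtain ⟨j, hj, hjb⟩ := Finset.mem_image.1 hb
    have hij : i ≠ j := fun he => hne (by rw [← hia, ← hjb, he])
    rcases lt_or_gt_of_ne hij with hlt | hgt
    · refine ⟨(i, j), by simp [Finset.mem_filter, hi, hj, hlt], ?_⟩
      show s(h i, h j) = s(a, b)
      rw [hia, hjb]
    · refine ⟨(j, i), by simp [Finset.mem_filter, hi, hj, hgt], ?_⟩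
      show s(h j, h i) = s(a, b)
      rw [hia, hjb]
      exact Sym2.eq_swap
  · rintro ⟨i, j⟩ hq
    simp [sqd]

lemma sum_ne_zero (hn : 1 ≤ n) :
    ∑ I ∈ Finset.powersetCard (Finset.univ.image h).card (Finset.univ : Finset (Fin n)),
      term h I ≠ 0 := by
  classical
  have : Nonempty (Fin n) := ⟨⟨0, by omega⟩⟩
  set S : Finset ℂ := Finset.univ.image h with hS
  set m : ℕ := S.card with hm
  set A : Finset (Finset (Fin n)) := Finset.powersetCard m Finset.univ with hA
  set B : Finset (Finset (Fin n)) := A.filter (fun I => Set.InjOn h ↑I) with hB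
  set C : ℂ := ∏ q ∈ (S.offDiag.image fun q => s(q.1, q.2)), sqd q with hC
  -- every member of B has image S
  have himB : ∀ I ∈ B, I.image h = S := by
    intro I hI
    rw [hB, Finset.mem_filter, hA, Finset.mem_powersetCard] at hI
    obtain ⟨⟨-, hcard⟩, hinj⟩ := hI
    refine Finset.eq_of_subset_of_card_le ?_ ?_
    · intro x hx
      obtain ⟨i, -, rfl⟩ := Finset.mem_image.1 hx
      exact Finset.mem_image_of_mem h (Finset.mem_univ i)
    · rw [Finset.card_image_of_injOn hinj, hcard]
  -- sum over A reduces to sum over B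
  have hsum : ∑ I ∈ A, term h I = ∑ I ∈ B, term h I := by
    rw [hB]
    refine (Finset.sum_filter_of_ne ?_).symm
    intro I _ hne
    by_contra hni
    exact hne (term_eq_zero h I hni)
  have hconst : ∑ I ∈ B, term h I = B.card • C := by
    rw [← Finset.sum_const]
    refine Finset.sum_congr rfl ?_
    intro I hI
    have hinj : Set.InjOn h ↑I := (Finset.mem_filter.1 hI).2
    exact term_eq_const h I hinj (himB I hI)
  -- C ≠ 0
  have hCne : C ≠ 0 := by
    rw [hC]
    rw [Finset.prod_ne_zero_iff]
    intro q hq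
    obtain ⟨⟨a, b⟩, hab, rfl⟩ := Finset.mem_image.1 hq
    obtain ⟨-, -, hne⟩ := Finset.mem_offDiag.1 hab
    show (a - b) ^ 2 ≠ 0
    exact pow_ne_zero _ (sub_ne_zero.2 hne)
  -- B is nonempty
  have hBne : B.Nonempty := by
    refine ⟨S.image (Function.invFun h), ?_⟩
    have hinv : ∀ a ∈ S, h (Function.invFun h a) = a := by
      intro a ha
      obtain ⟨i, -, hi⟩ := Finset.mem_image.1 ha
      exact Function.invFun_eq ⟨i, hi⟩
    have himg : (S.image (Function.invFun h)).image h = S := by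
      rw [Finset.image_image]
      calc S.image (h ∘ Function.invFun h) = S.image id := Finset.image_congr hinv
      _ = S := Finset.image_id
    have hc1 : (S.image (Function.invFun h)).card ≤ m := Finset.card_image_le
    have hc2 : m ≤ (S.image (Function.invFun h)).card := by
      conv_lhs => rw [hm, ← himg]
      exact Finset.card_image_le
    have hcard : (S.image (Function.invFun h)).card = m := le_antisymm hc1 hc2
    rw [hB, Finset.mem_filter, hA, Finset.mem_powersetCard]
    refine ⟨⟨Finset.subset_univ _, hcard⟩, ?_⟩
    rw [← Finset.card_image_iff, himg, hcard]
  rw [hsum, hconst]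
  have : (B.card : ℂ) ≠ 0 := Nat.cast_ne_zero.2 (Finset.card_ne_zero_of_mem hBne.choose_spec)
  rw [nsmul_eq_mul]
  exact mul_ne_zero this hCne

end SubdiscAux

/-- Vanishing of the first `p` subdiscriminants
`Δ^(k) = Σ_{I ⊆ {1,…,n}, |I| = n-k} Π_{i<j ∈ I} (h_i - h_j)²` for `0 ≤ k < p`
is equivalent to the polynomial `Π (X - h_i)` having at least `p` double roots,
i.e. to the number of distinct values among `h₁, …, h_n` being at most `n - p`. -/
theorem subdiscriminants_vanish_iff_double_roots (n : ℕ) (hn : 2 ≤ n) (h : Fin n → ℂ)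
    (p : ℕ) (hp1 : 1 ≤ p) (hp2 : p ≤ n - 1) :
    (∀ k < p, ∑ I ∈ Finset.powersetCard (n - k) (Finset.univ : Finset (Fin n)),
        ∏ i ∈ I, ∏ j ∈ I.filter (fun j => i < j), (h i - h j) ^ 2 = 0)
      ↔ (Finset.univ.image h).card ≤ n - p := by
  classical
  set S : Finset ℂ := Finset.univ.image h with hS
  set m : ℕ := S.card with hm
  have hmn : m ≤ n := by
    calc m ≤ (Finset.univ : Finset (Fin n)).card := Finset.card_image_le
    _ = n := by simp
  constructor
  · intro hall
    by_contra hcon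
    push_neg at hcon
    -- hcon : n - p < m
    have hk : n - m < p := by omega
    have hsum := hall (n - m) hk
    have hnm : n - (n - m) = m := by omega
    rw [hnm] at hsum
    exact SubdiscAux.sum_ne_zero h (by omega) hsum
  · intro hle k hk
    apply Finset.sum_eq_zero
    intro I hI
    have hcard : I.card = n - k := (Finset.mem_powersetCard.1 hI).2
    apply SubdiscAux.term_eq_zero
    intro hinj
    have h1 : I.card = (I.image h).card := (Finset.card_image_of_injOn hinj).symm
    have h2 : (I.image h).card ≤ m := Finset.card_le_card (by
      intro x hx; obtain ⟨i, -, rfl⟩ := Finset.mem_image.1 hx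
      exact Finset.mem_image_of_mem h (Finset.mem_univ i))
    omega
end

section
/- Let K be a field of characteristic zero, let u ∈ K be nonzero, and let N, r be integers with N/2 ≤ r ≤ N−1. Suppose W, P, Δ, M, C ∈ K[z] satisfy: W is monic of degree r, P is monic of degree N, deg Δ ≤ r−1, M is monic of degree N−r, C is monic of degree 2r−N, P + 2u = M²·C, and M²·(W² − 4Δ) = P² − 4u². Then W = M·C, Δ = u·C, and P = M²·C − 2u. -/
/-- Explicit solution of the factorization constraints in the phases with
refined rank `{0, N-r}` of the U(N) theory with one adjoint.  Here `K` is a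
field of characteristic zero, `u ≠ 0` plays the role of `q^(1/2)`, and
`N/2 ≤ r ≤ N - 1`.  If `W` is monic of degree `r`, `P` monic of degree `N`,
`deg Δ ≤ r - 1`, `M` monic of degree `N - r`, `C` monic of degree `2r - N`,
`P + 2u = M²·C` and `M²·(W² - 4Δ) = P² - 4u²`, then `W = M·C`, `Δ = u·C` and
`P = M²·C - 2u`. -/
theorem factorization_solution_szero {K : Type*} [Field K] [CharZero K]
    (u : K) (hu : u ≠ 0) (N r : ℕ) (h1 : N ≤ 2 * r) (h2 : r + 1 ≤ N)
    (W P Δ M C : Polynomial K)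
    (hW : W.Monic) (hWdeg : W.natDegree = r)
    (hP : P.Monic) (hPdeg : P.natDegree = N)
    (hΔdeg : Δ.natDegree ≤ r - 1)
    (hM : M.Monic) (hMdeg : M.natDegree = N - r)
    (hC : C.Monic) (hCdeg : C.natDegree = 2 * r - N)
    (hfac1 : P + Polynomial.C (2 * u) = M ^ 2 * C)
    (hfac2 : M ^ 2 * (W ^ 2 - 4 * Δ) = P ^ 2 - Polynomial.C (4 * u ^ 2)) :
    W = M * C ∧ Δ = Polynomial.C u * C ∧ P = M ^ 2 * C - Polynomial.C (2 * u) := by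
  have hM0 : M ≠ 0 := hM.ne_zero
  have hM2 : M ^ 2 ≠ 0 := pow_ne_zero 2 hM0
  have e1 : Polynomial.C (2 * u) = 2 * Polynomial.C u := by
    rw [map_mul, map_ofNat]
  have e2 : Polynomial.C (4 * u ^ 2) = 4 * Polynomial.C u ^ 2 := by
    rw [map_mul, map_ofNat, map_pow]
  have hPeq : P = M ^ 2 * C - Polynomial.C (2 * u) := by
    linear_combination hfac1
  have hcancel : W ^ 2 - 4 * Δ = (M * C) ^ 2 - 4 * (Polynomial.C u * C) := by
    apply mul_left_cancel₀ hM2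
    rw [hfac2, hPeq, e1, e2]
    ring
  have hkey : (W - M * C) * (W + M * C) = 4 * Δ - 4 * (Polynomial.C u * C) := by
    linear_combination hcancel
  have hCr : C.natDegree ≤ r - 1 := by rw [hCdeg]; omega
  have hRdeg : ((4 : Polynomial K) * Δ - 4 * (Polynomial.C u * C)).natDegree ≤ r - 1 := by
    apply le_trans (Polynomial.natDegree_sub_le _ _)
    rw [max_le_iff]
    constructor
    · exact le_trans (Polynomial.natDegree_mul_le)
        (by simpa using hΔdeg)
    · refine le_trans (Polynomial.natDegree_mul_le) ?_
      have := Polynomial.natDegree_mul_le (p := Polynomial.C u) (q := C)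
      simp only [Polynomial.natDegree_ofNat, Polynomial.natDegree_C, zero_add] at *
      exact le_trans this (by simpa using hCr)
  have hMC : (M * C).Monic := hM.mul hC
  have hMCdeg : (M * C).natDegree = r := by
    rw [hM.natDegree_mul hC, hMdeg, hCdeg]; omega
  have hsumdeg : (W + M * C).natDegree = r := by
    apply le_antisymm
    · exact le_trans (Polynomial.natDegree_add_le _ _) (by rw [hWdeg, hMCdeg]; omega)
    · apply Polynomial.le_natDegree_of_ne_zero
      have c1 : W.coeff r = 1 := by rw [← hWdeg]; exact hW.coeff_natDegree
      have c2 : (M * C).coeff r = 1 := by rw [← hMCdeg]; exact hMC.coeff_natDegree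
      rw [Polynomial.coeff_add, c1, c2]
      norm_num
  have hsum0 : W + M * C ≠ 0 := by
    intro h
    rw [h] at hsumdeg
    simp at hsumdeg
    omega
  have hWMC : W = M * C := by
    by_contra h
    have hD : W - M * C ≠ 0 := sub_ne_zero_of_ne h
    have := Polynomial.natDegree_mul hD hsum0
    rw [hkey, hsumdeg] at this
    have : ((4 : Polynomial K) * Δ - 4 * (Polynomial.C u * C)).natDegree ≥ r := by omega
    omega
  have h4 : (4 : Polynomial K) ≠ 0 := by norm_num
  have hΔ : Δ = Polynomial.C u * C := by
    apply mul_left_cancel₀ h4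
    rw [hWMC, sub_self, zero_mul] at hkey
    linear_combination -hkey
  exact ⟨hWMC, hΔ, hPeq⟩
end

section
/- The polynomial P(x) = x¹⁵ + (3qg₁ − qg₂²)x¹² + 15q²x¹⁰ + (12q³g₁ − 4q³g₂²)x⁷ + (−4g₁³q³ − 4g₀g₂³q³ − 27g₀²q³ + g₁²g₂²q³ + 18g₀g₁g₂q³)x⁶ + 48q⁴x⁵ + (−4g₂⁴q⁴ − 36g₁²q⁴ + 24g₁g₂²q⁴)x⁴ + (32q⁵g₂² − 96q⁵g₁)x² − 64q⁶ is irreducible in ℂ(g₀,g₁,g₂,q)[x], where ℂ(g₀,g₁,g₂,q) is the field of rational functions in four independent indeterminates g₀, g₁, g₂, q over ℂ. -/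
open Polynomial Finset

namespace GaussCore

variable {A : Type*} [CommRing A] [IsDomain A]

/-- Degree-like data on a domain. -/
structure DegData (A : Type*) [CommRing A] [IsDomain A] where
  d : A → ℕ
  hmul : ∀ x y : A, x ≠ 0 → y ≠ 0 → d (x * y) = d x + d y
  hadd : ∀ x y : A, d (x + y) ≤ max (d x) (d y)
  hneg : ∀ x : A, d (-x) = d x

variable (D : DegData A) (m k : ℤ)

lemma DegData.done : D.d 1 = 0 := by
  have := D.hmul 1 1 one_ne_zero one_ne_zero
  simpa using this.symm

/-- weighted value of the `i`-th coefficient -/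
def vv (P : A[X]) (i : ℕ) : ℤ := k * D.d (P.coeff i) + m * i

/-- set of indices attaining the maximal weighted value -/
def att (P : A[X]) : Finset ℕ :=
  P.support.filter (fun i => ∀ j ∈ P.support, vv D m k P j ≤ vv D m k P i)

lemma att_nonempty {P : A[X]} (hP : P ≠ 0) : (att D m k P).Nonempty := by
  obtain ⟨i, hi, hmax⟩ := P.support.exists_max_image (vv D m k P)
    (Polynomial.support_nonempty.mpr hP)
  exact ⟨i, Finset.mem_filter.2 ⟨hi, hmax⟩⟩

noncomputable def ip (P : A[X]) : ℕ := ((att D m k P).max).getD 0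

noncomputable def im (P : A[X]) : ℕ := ((att D m k P).min).getD 0

lemma ip_eq_max' {P : A[X]} (hP : P ≠ 0) :
    ip D m k P = (att D m k P).max' (att_nonempty D m k hP) := by
  rw [ip, ← Finset.coe_max' (att_nonempty D m k hP)]
  rfl

lemma im_eq_min' {P : A[X]} (hP : P ≠ 0) :
    im D m k P = (att D m k P).min' (att_nonempty D m k hP) := by
  rw [im, ← Finset.coe_min' (att_nonempty D m k hP)]
  rfl

lemma ip_mem {P : A[X]} (hP : P ≠ 0) : ip D m k P ∈ att D m k P := by
  rw [ip_eq_max' D m k hP]; exact Finset.max'_mem _ _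
lemma im_mem {P : A[X]} (hP : P ≠ 0) : im D m k P ∈ att D m k P := by
  rw [im_eq_min' D m k hP]; exact Finset.min'_mem _ _

lemma mem_support_of_mem_att {P : A[X]} {i : ℕ} (h : i ∈ att D m k P) : i ∈ P.support :=
  (Finset.mem_filter.1 h).1

lemma coeff_ne_zero_of_mem_att {P : A[X]} {i : ℕ} (h : i ∈ att D m k P) : P.coeff i ≠ 0 :=
  Polynomial.mem_support_iff.1 (mem_support_of_mem_att D m k h)

lemma le_att {P : A[X]} {i j : ℕ} (h : i ∈ att D m k P) (hj : j ∈ P.support) :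
    vv D m k P j ≤ vv D m k P i :=
  (Finset.mem_filter.1 h).2 j hj

lemma att_vv_eq {P : A[X]} {i j : ℕ} (h : i ∈ att D m k P) (h' : j ∈ att D m k P) :
    vv D m k P i = vv D m k P j :=
  le_antisymm (le_att D m k h' (mem_support_of_mem_att D m k h))
    (le_att D m k h (mem_support_of_mem_att D m k h'))

lemma vv_lt_of_ip_lt {P : A[X]} (hP : P ≠ 0) {j : ℕ} (hj : j ∈ P.support)
    (h : ip D m k P < j) : vv D m k P j < vv D m k P (ip D m k P) := by
  rcases lt_or_eq_of_le (le_att D m k (ip_mem D m k hP) hj) with h' | h'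
  · exact h'
  · exfalso
    have hjatt : j ∈ att D m k P := by
      refine Finset.mem_filter.2 ⟨hj, fun j' hj' => ?_⟩
      rw [h']; exact le_att D m k (ip_mem D m k hP) hj'
    rw [ip_eq_max' D m k hP] at h
    exact absurd (Finset.le_max' _ j hjatt) (not_le.2 h)

lemma vv_lt_of_lt_im {P : A[X]} (hP : P ≠ 0) {j : ℕ} (hj : j ∈ P.support)
    (h : j < im D m k P) : vv D m k P j < vv D m k P (im D m k P) := by
  rcases lt_or_eq_of_le (le_att D m k (im_mem D m k hP) hj) with h' | h'
  · exact h'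
  · exfalso
    have hjatt : j ∈ att D m k P := by
      refine Finset.mem_filter.2 ⟨hj, fun j' hj' => ?_⟩
      rw [h']; exact le_att D m k (im_mem D m k hP) hj'
    rw [im_eq_min' D m k hP] at h
    exact absurd (Finset.min'_le _ j hjatt) (not_le.2 h)

lemma ip_le_natDegree {P : A[X]} (hP : P ≠ 0) : ip D m k P ≤ P.natDegree :=
  Polynomial.le_natDegree_of_mem_supp _ (mem_support_of_mem_att D m k (ip_mem D m k hP))

lemma im_le_natDegree {P : A[X]} (hP : P ≠ 0) : im D m k P ≤ P.natDegree :=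
  Polynomial.le_natDegree_of_mem_supp _ (mem_support_of_mem_att D m k (im_mem D m k hP))

/-- bounded-sum helper -/
lemma sum_bound {ι : Type*} (s : Finset ι) (f : ι → A) (B : ℤ) (hk : 0 < k)
    (h : ∀ x ∈ s, f x = 0 ∨ k * D.d (f x) ≤ B) :
    (∑ x ∈ s, f x) = 0 ∨ k * D.d (∑ x ∈ s, f x) ≤ B := by
  refine Finset.sum_induction f (fun y => y = 0 ∨ k * D.d y ≤ B) ?_ (Or.inl rfl) h
  intro a b ha hb
  rcases ha with ha | ha
  · rw [ha, zero_add]; exact hb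
  rcases hb with hb | hb
  · rw [hb, add_zero]; exact Or.inr ha
  by_cases hab : a + b = 0
  · exact Or.inl hab
  · right
    have h1 := D.hadd a b
    rcases le_max_iff.1 h1 with h' | h'
    · have : (D.d (a + b) : ℤ) ≤ (D.d a : ℤ) := by exact_mod_cast h'
      nlinarith
    · have : (D.d (a + b) : ℤ) ≤ (D.d b : ℤ) := by exact_mod_cast h'
      nlinarith

end GaussCore

namespace GaussCore
variable {A : Type*} [CommRing A] [IsDomain A]
variable (D : DegData A) (m k : ℤ)

section Key
variable (hk : 0 < k) {P Q : A[X]} (hP : P ≠ 0) (hQ : Q ≠ 0)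
include hP hQ

lemma term_bound {i j : ℕ} (hi : P.coeff i ≠ 0) (hj : Q.coeff j ≠ 0) :
    k * D.d (P.coeff i * Q.coeff j) + m * ((i : ℤ) + j) ≤
      vv D m k P (ip D m k P) + vv D m k Q (ip D m k Q) := by
  have h1 := le_att D m k (ip_mem D m k hP) (Polynomial.mem_support_iff.2 hi)
  have h2 := le_att D m k (ip_mem D m k hQ) (Polynomial.mem_support_iff.2 hj)
  rw [D.hmul _ _ hi hj]
  unfold vv at *
  push_cast
  push_cast at h1 h2
  linarith

lemma term_bound_strict {i j : ℕ} (hi : P.coeff i ≠ 0) (hj : Q.coeff j ≠ 0)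
    (hsum : ip D m k P + ip D m k Q ≤ i + j)
    (hne : ¬(i = ip D m k P ∧ j = ip D m k Q)) :
    k * D.d (P.coeff i * Q.coeff j) + m * ((i : ℤ) + j) <
      vv D m k P (ip D m k P) + vv D m k Q (ip D m k Q) := by
  rcases lt_or_ge (ip D m k P) i with hgt | hle
  · have h1 := vv_lt_of_ip_lt D m k hP (Polynomial.mem_support_iff.2 hi) hgt
    have h2 := le_att D m k (ip_mem D m k hQ) (Polynomial.mem_support_iff.2 hj)
    rw [D.hmul _ _ hi hj]
    unfold vv at *; push_cast; push_cast at h1 h2; linarith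
  · rcases lt_or_ge (ip D m k Q) j with hgt' | hle'
    · have h1 := le_att D m k (ip_mem D m k hP) (Polynomial.mem_support_iff.2 hi)
      have h2 := vv_lt_of_ip_lt D m k hQ (Polynomial.mem_support_iff.2 hj) hgt'
      rw [D.hmul _ _ hi hj]
      unfold vv at *; push_cast; push_cast at h1 h2; linarith
    · exact absurd ⟨by omega, by omega⟩ hne

lemma dominant_coeff (hk : 0 < k) :
    (P * Q).coeff (ip D m k P + ip D m k Q) ≠ 0 ∧
      vv D m k (P * Q) (ip D m k P + ip D m k Q) =
        vv D m k P (ip D m k P) + vv D m k Q (ip D m k Q) := by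
  set iP := ip D m k P with hiP
  set iQ := ip D m k Q with hiQ
  set n₀ := iP + iQ with hn₀
  have hPiP : P.coeff iP ≠ 0 := coeff_ne_zero_of_mem_att D m k (ip_mem D m k hP)
  have hQiQ : Q.coeff iQ ≠ 0 := coeff_ne_zero_of_mem_att D m k (ip_mem D m k hQ)
  set c := P.coeff iP * Q.coeff iQ with hc
  have hcne : c ≠ 0 := mul_ne_zero hPiP hQiQ
  have hmem : (iP, iQ) ∈ Finset.HasAntidiagonal.antidiagonal n₀ := Finset.HasAntidiagonal.mem_antidiagonal.2 rfl
  have hsplit : (P * Q).coeff n₀ =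
      c + ∑ x ∈ (Finset.HasAntidiagonal.antidiagonal n₀).erase (iP, iQ), P.coeff x.1 * Q.coeff x.2 := by
    rw [Polynomial.coeff_mul, ← Finset.add_sum_erase _ _ hmem]
  set r := ∑ x ∈ (Finset.HasAntidiagonal.antidiagonal n₀).erase (iP, iQ), P.coeff x.1 * Q.coeff x.2 with hr
  have hrb : r = 0 ∨ k * D.d r ≤ k * D.d c - 1 := by
    refine sum_bound D k _ _ _ hk ?_
    intro x hx
    rcases Finset.mem_erase.1 hx with ⟨hxne, hxmem⟩
    by_cases h1 : P.coeff x.1 = 0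
    · exact Or.inl (by rw [h1, zero_mul])
    by_cases h2 : Q.coeff x.2 = 0
    · exact Or.inl (by rw [h2, mul_zero])
    right
    have hx12 : x.1 + x.2 = n₀ := Finset.HasAntidiagonal.mem_antidiagonal.1 hxmem
    have hstrict := term_bound_strict D m k hP hQ h1 h2 (by omega)
      (by intro ⟨ha, hb⟩
          rw [← hiP] at ha; rw [← hiQ] at hb
          exact hxne (Prod.ext ha hb))
    have hceq : k * D.d c + m * ((iP : ℤ) + iQ) =
        vv D m k P iP + vv D m k Q iQ := by
      rw [hc, D.hmul _ _ hPiP hQiQ]; unfold vv; push_cast; ring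
    have hxc : ((x.1 : ℤ) + x.2) = ((iP : ℤ) + iQ) := by exact_mod_cast congrArg (Nat.cast (R := ℤ)) hx12
    rw [hxc] at hstrict
    linarith
  have hdcr : (c + r ≠ 0) ∧ D.d (c + r) = D.d c := by
    rcases hrb with h0 | hlt
    · rw [h0, add_zero]; exact ⟨hcne, rfl⟩
    · have hdrdc : D.d r < D.d c := by
        have h4 : k * (D.d r : ℤ) < k * (D.d c : ℤ) := by linarith
        exact_mod_cast lt_of_mul_lt_mul_left h4 (le_of_lt hk)
      constructor
      · intro h0
        have hrc : r = -c := eq_neg_of_add_eq_zero_right h0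
        rw [hrc, D.hneg] at hdrdc
        exact absurd hdrdc (lt_irrefl _)
      · refine le_antisymm (le_trans (D.hadd c r) (max_le (le_refl _) (le_of_lt hdrdc))) ?_
        have h2 := D.hadd (c + r) (-r)
        rw [D.hneg] at h2
        have h3 : c + r + -r = c := by ring
        rw [h3] at h2
        rcases le_max_iff.1 h2 with h | h
        · exact h
        · omega
  constructor
  · rw [hsplit]; exact hdcr.1
  · have hceq : k * D.d c + m * ((iP : ℤ) + iQ) = vv D m k P iP + vv D m k Q iQ := by
      rw [hc, D.hmul _ _ hPiP hQiQ]; unfold vv; push_cast; ring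
    unfold vv at hceq ⊢
    rw [hsplit, hdcr.2]
    have hncast : ((n₀ : ℕ) : ℤ) = (iP : ℤ) + iQ := by rw [hn₀]; push_cast; ring
    rw [hncast]
    linarith

end Key
end GaussCore

namespace GaussCore
variable {A : Type*} [CommRing A] [IsDomain A]
variable (D : DegData A) (m k : ℤ)

section Key2
variable {P Q : A[X]} (hP : P ≠ 0) (hQ : Q ≠ 0)
include hP hQ

lemma term_bound_strict_im {i j : ℕ} (hi : P.coeff i ≠ 0) (hj : Q.coeff j ≠ 0)
    (hsum : i + j ≤ im D m k P + im D m k Q)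
    (hne : ¬(i = im D m k P ∧ j = im D m k Q)) :
    k * D.d (P.coeff i * Q.coeff j) + m * ((i : ℤ) + j) <
      vv D m k P (im D m k P) + vv D m k Q (im D m k Q) := by
  rcases lt_or_ge i (im D m k P) with hgt | hle
  · have h1 := vv_lt_of_lt_im D m k hP (Polynomial.mem_support_iff.2 hi) hgt
    have h2 := le_att D m k (im_mem D m k hQ) (Polynomial.mem_support_iff.2 hj)
    rw [D.hmul _ _ hi hj]
    unfold vv at *; push_cast; linarith
  · rcases lt_or_ge j (im D m k Q) with hgt' | hle'
    · have h1 := le_att D m k (im_mem D m k hP) (Polynomial.mem_support_iff.2 hi)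
      have h2 := vv_lt_of_lt_im D m k hQ (Polynomial.mem_support_iff.2 hj) hgt'
      rw [D.hmul _ _ hi hj]
      unfold vv at *; push_cast; linarith
    · exact absurd ⟨by omega, by omega⟩ hne

lemma term_bound_im {i j : ℕ} (hi : P.coeff i ≠ 0) (hj : Q.coeff j ≠ 0) :
    k * D.d (P.coeff i * Q.coeff j) + m * ((i : ℤ) + j) ≤
      vv D m k P (im D m k P) + vv D m k Q (im D m k Q) := by
  have h1 := le_att D m k (im_mem D m k hP) (Polynomial.mem_support_iff.2 hi)
  have h2 := le_att D m k (im_mem D m k hQ) (Polynomial.mem_support_iff.2 hj)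
  rw [D.hmul _ _ hi hj]
  unfold vv at *
  push_cast
  linarith

lemma dominant_coeff_im (hk : 0 < k) :
    (P * Q).coeff (im D m k P + im D m k Q) ≠ 0 ∧
      vv D m k (P * Q) (im D m k P + im D m k Q) =
        vv D m k P (im D m k P) + vv D m k Q (im D m k Q) := by
  set iP := im D m k P with hiP
  set iQ := im D m k Q with hiQ
  set n₀ := iP + iQ with hn₀
  have hPiP : P.coeff iP ≠ 0 := coeff_ne_zero_of_mem_att D m k (im_mem D m k hP)
  have hQiQ : Q.coeff iQ ≠ 0 := coeff_ne_zero_of_mem_att D m k (im_mem D m k hQ)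
  set c := P.coeff iP * Q.coeff iQ with hc
  have hcne : c ≠ 0 := mul_ne_zero hPiP hQiQ
  have hmem : (iP, iQ) ∈ Finset.HasAntidiagonal.antidiagonal n₀ := Finset.HasAntidiagonal.mem_antidiagonal.2 rfl
  have hsplit : (P * Q).coeff n₀ =
      c + ∑ x ∈ (Finset.HasAntidiagonal.antidiagonal n₀).erase (iP, iQ), P.coeff x.1 * Q.coeff x.2 := by
    rw [Polynomial.coeff_mul, ← Finset.add_sum_erase _ _ hmem]
  set r := ∑ x ∈ (Finset.HasAntidiagonal.antidiagonal n₀).erase (iP, iQ), P.coeff x.1 * Q.coeff x.2 with hr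
  have hrb : r = 0 ∨ k * D.d r ≤ k * D.d c - 1 := by
    refine sum_bound D k _ _ _ hk ?_
    intro x hx
    rcases Finset.mem_erase.1 hx with ⟨hxne, hxmem⟩
    by_cases h1 : P.coeff x.1 = 0
    · exact Or.inl (by rw [h1, zero_mul])
    by_cases h2 : Q.coeff x.2 = 0
    · exact Or.inl (by rw [h2, mul_zero])
    right
    have hx12 : x.1 + x.2 = n₀ := Finset.HasAntidiagonal.mem_antidiagonal.1 hxmem
    have hstrict := term_bound_strict_im D m k hP hQ h1 h2 (by omega)
      (by intro ⟨ha, hb⟩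
          rw [← hiP] at ha; rw [← hiQ] at hb
          exact hxne (Prod.ext ha hb))
    have hceq : k * D.d c + m * ((iP : ℤ) + iQ) =
        vv D m k P iP + vv D m k Q iQ := by
      rw [hc, D.hmul _ _ hPiP hQiQ]; unfold vv; push_cast; ring
    have hxc : ((x.1 : ℤ) + x.2) = ((iP : ℤ) + iQ) := by exact_mod_cast congrArg (Nat.cast (R := ℤ)) hx12
    rw [hxc] at hstrict
    linarith
  have hdcr : (c + r ≠ 0) ∧ D.d (c + r) = D.d c := by
    rcases hrb with h0 | hlt
    · rw [h0, add_zero]; exact ⟨hcne, rfl⟩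
    · have hdrdc : D.d r < D.d c := by
        have h4 : k * (D.d r : ℤ) < k * (D.d c : ℤ) := by linarith
        exact_mod_cast lt_of_mul_lt_mul_left h4 (le_of_lt hk)
      constructor
      · intro h0
        have hrc : r = -c := eq_neg_of_add_eq_zero_right h0
        rw [hrc, D.hneg] at hdrdc
        exact absurd hdrdc (lt_irrefl _)
      · refine le_antisymm (le_trans (D.hadd c r) (max_le (le_refl _) (le_of_lt hdrdc))) ?_
        have h2 := D.hadd (c + r) (-r)
        rw [D.hneg] at h2
        have h3 : c + r + -r = c := by ring
        rw [h3] at h2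
        rcases le_max_iff.1 h2 with h | h
        · exact h
        · omega
  constructor
  · rw [hsplit]; exact hdcr.1
  · have hceq : k * D.d c + m * ((iP : ℤ) + iQ) = vv D m k P iP + vv D m k Q iQ := by
      rw [hc, D.hmul _ _ hPiP hQiQ]; unfold vv; push_cast; ring
    unfold vv at hceq ⊢
    rw [hsplit, hdcr.2]
    have hncast : ((n₀ : ℕ) : ℤ) = (iP : ℤ) + iQ := by rw [hn₀]; push_cast; ring
    rw [hncast]
    linarith

lemma vv_mul_le (hk : 0 < k) {n : ℕ} (hn : n ∈ (P * Q).support) :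
    vv D m k (P * Q) n ≤ vv D m k P (ip D m k P) + vv D m k Q (ip D m k Q) := by
  have hcn : (P * Q).coeff n ≠ 0 := Polynomial.mem_support_iff.1 hn
  set S := vv D m k P (ip D m k P) + vv D m k Q (ip D m k Q) with hS
  have hb : (∑ x ∈ Finset.HasAntidiagonal.antidiagonal n, P.coeff x.1 * Q.coeff x.2) = 0 ∨
      k * D.d (∑ x ∈ Finset.HasAntidiagonal.antidiagonal n, P.coeff x.1 * Q.coeff x.2) ≤ S - m * n := by
    refine sum_bound D k _ _ _ hk ?_
    intro x hx
    by_cases h1 : P.coeff x.1 = 0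
    · exact Or.inl (by rw [h1, zero_mul])
    by_cases h2 : Q.coeff x.2 = 0
    · exact Or.inl (by rw [h2, mul_zero])
    right
    have hx12 : x.1 + x.2 = n := Finset.HasAntidiagonal.mem_antidiagonal.1 hx
    have := term_bound D m k hP hQ h1 h2
    have hxc : ((x.1 : ℤ) + x.2) = (n : ℤ) := by exact_mod_cast congrArg (Nat.cast (R := ℤ)) hx12
    rw [hxc] at this
    linarith
  rw [← Polynomial.coeff_mul] at hb
  rcases hb with h0 | hle
  · exact absurd h0 hcn
  · unfold vv; linarith

lemma vv_mul_lt_above (hk : 0 < k) {n : ℕ} (hn : n ∈ (P * Q).support)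
    (hgt : ip D m k P + ip D m k Q < n) :
    vv D m k (P * Q) n < vv D m k P (ip D m k P) + vv D m k Q (ip D m k Q) := by
  have hcn : (P * Q).coeff n ≠ 0 := Polynomial.mem_support_iff.1 hn
  set S := vv D m k P (ip D m k P) + vv D m k Q (ip D m k Q) with hS
  have hb : (∑ x ∈ Finset.HasAntidiagonal.antidiagonal n, P.coeff x.1 * Q.coeff x.2) = 0 ∨
      k * D.d (∑ x ∈ Finset.HasAntidiagonal.antidiagonal n, P.coeff x.1 * Q.coeff x.2) ≤ S - m * n - 1 := by
    refine sum_bound D k _ _ _ hk ?_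
    intro x hx
    by_cases h1 : P.coeff x.1 = 0
    · exact Or.inl (by rw [h1, zero_mul])
    by_cases h2 : Q.coeff x.2 = 0
    · exact Or.inl (by rw [h2, mul_zero])
    right
    have hx12 : x.1 + x.2 = n := Finset.HasAntidiagonal.mem_antidiagonal.1 hx
    have := term_bound_strict D m k hP hQ h1 h2 (by omega) (by intro ⟨ha, hb⟩; omega)
    have hxc : ((x.1 : ℤ) + x.2) = (n : ℤ) := by exact_mod_cast congrArg (Nat.cast (R := ℤ)) hx12
    rw [hxc] at this
    linarith
  rw [← Polynomial.coeff_mul] at hb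
  rcases hb with h0 | hle
  · exact absurd h0 hcn
  · unfold vv; linarith

lemma vv_mul_lt_below (hk : 0 < k) {n : ℕ} (hn : n ∈ (P * Q).support)
    (hlt : n < im D m k P + im D m k Q) :
    vv D m k (P * Q) n < vv D m k P (im D m k P) + vv D m k Q (im D m k Q) := by
  have hcn : (P * Q).coeff n ≠ 0 := Polynomial.mem_support_iff.1 hn
  set S := vv D m k P (im D m k P) + vv D m k Q (im D m k Q) with hS
  have hb : (∑ x ∈ Finset.HasAntidiagonal.antidiagonal n, P.coeff x.1 * Q.coeff x.2) = 0 ∨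
      k * D.d (∑ x ∈ Finset.HasAntidiagonal.antidiagonal n, P.coeff x.1 * Q.coeff x.2) ≤ S - m * n - 1 := by
    refine sum_bound D k _ _ _ hk ?_
    intro x hx
    by_cases h1 : P.coeff x.1 = 0
    · exact Or.inl (by rw [h1, zero_mul])
    by_cases h2 : Q.coeff x.2 = 0
    · exact Or.inl (by rw [h2, mul_zero])
    right
    have hx12 : x.1 + x.2 = n := Finset.HasAntidiagonal.mem_antidiagonal.1 hx
    have := term_bound_strict_im D m k hP hQ h1 h2 (by omega) (by intro ⟨ha, hb⟩; omega)
    have hxc : ((x.1 : ℤ) + x.2) = (n : ℤ) := by exact_mod_cast congrArg (Nat.cast (R := ℤ)) hx12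
    rw [hxc] at this
    linarith
  rw [← Polynomial.coeff_mul] at hb
  rcases hb with h0 | hle
  · exact absurd h0 hcn
  · unfold vv; linarith

lemma ip_mul (hk : 0 < k) (hPQ : P * Q ≠ 0) :
    ip D m k (P * Q) = ip D m k P + ip D m k Q := by
  obtain ⟨hne, heq⟩ := dominant_coeff D m k hP hQ hk
  have hsupp : ip D m k P + ip D m k Q ∈ (P * Q).support :=
    Polynomial.mem_support_iff.2 hne
  have hat : ip D m k P + ip D m k Q ∈ att D m k (P * Q) := by
    refine Finset.mem_filter.2 ⟨hsupp, fun j hj => ?_⟩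
    rw [heq]
    exact vv_mul_le D m k hP hQ hk hj
  refine le_antisymm ?_ (by rw [ip_eq_max' D m k hPQ]; exact Finset.le_max' _ _ hat)
  by_contra hcon
  have hgt : ip D m k P + ip D m k Q < ip D m k (P * Q) := by omega
  have h1 := vv_mul_lt_above D m k hP hQ hk
    (mem_support_of_mem_att D m k (ip_mem D m k hPQ)) hgt
  have h2 := le_att D m k (ip_mem D m k hPQ) hsupp
  rw [heq] at h2
  linarith

lemma im_mul (hk : 0 < k) (hPQ : P * Q ≠ 0) :
    im D m k (P * Q) = im D m k P + im D m k Q := by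
  obtain ⟨hne, heq⟩ := dominant_coeff_im D m k hP hQ hk
  have hsupp : im D m k P + im D m k Q ∈ (P * Q).support :=
    Polynomial.mem_support_iff.2 hne
  have hat : im D m k P + im D m k Q ∈ att D m k (P * Q) := by
    refine Finset.mem_filter.2 ⟨hsupp, fun j hj => ?_⟩
    rw [heq, att_vv_eq D m k (im_mem D m k hP) (ip_mem D m k hP),
      att_vv_eq D m k (im_mem D m k hQ) (ip_mem D m k hQ)]
    exact vv_mul_le D m k hP hQ hk hj
  refine le_antisymm (by rw [im_eq_min' D m k hPQ]; exact Finset.min'_le _ _ hat) ?_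
  by_contra hcon
  have hlt : im D m k (P * Q) < im D m k P + im D m k Q := by omega
  have h1 := vv_mul_lt_below D m k hP hQ hk
    (mem_support_of_mem_att D m k (im_mem D m k hPQ)) hlt
  have h2 := le_att D m k (im_mem D m k hPQ) hsupp
  rw [heq] at h2
  linarith

end Key2
end GaussCore

noncomputable section Inst
open GaussCore Polynomial

abbrev R4 := MvPolynomial (Fin 4) ℂ
abbrev R3 := MvPolynomial (Fin 3) ℂ

def E0 : R4 ≃ₐ[ℂ] Polynomial R3 := MvPolynomial.finSuccEquiv ℂ 3

def E3 : R4 ≃ₐ[ℂ] Polynomial R3 :=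
  (MvPolynomial.renameEquiv ℂ (Equiv.swap (3 : Fin 4) 0)).trans (MvPolynomial.finSuccEquiv ℂ 3)

lemma E0_X0 : E0 (MvPolynomial.X 0) = Polynomial.X := by
  simp [E0, MvPolynomial.finSuccEquiv_X_zero]

lemma E0_X1 : E0 (MvPolynomial.X 1) = Polynomial.C (MvPolynomial.X 0) := by
  rw [E0, show (1 : Fin 4) = Fin.succ 0 by decide, MvPolynomial.finSuccEquiv_X_succ]

lemma E0_X2 : E0 (MvPolynomial.X 2) = Polynomial.C (MvPolynomial.X 1) := by
  rw [E0, show (2 : Fin 4) = Fin.succ 1 by decide, MvPolynomial.finSuccEquiv_X_succ]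

lemma E0_X3 : E0 (MvPolynomial.X 3) = Polynomial.C (MvPolynomial.X 2) := by
  rw [E0, show (3 : Fin 4) = Fin.succ 2 by decide, MvPolynomial.finSuccEquiv_X_succ]

lemma E3_X3 : E3 (MvPolynomial.X 3) = Polynomial.X := by
  rw [E3, AlgEquiv.trans_apply, MvPolynomial.renameEquiv_apply, MvPolynomial.rename_X,
    show Equiv.swap (3 : Fin 4) 0 3 = 0 by decide, MvPolynomial.finSuccEquiv_X_zero]

lemma E3_X0 : E3 (MvPolynomial.X 0) = Polynomial.C (MvPolynomial.X 2) := by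
  rw [E3, AlgEquiv.trans_apply, MvPolynomial.renameEquiv_apply, MvPolynomial.rename_X,
    show Equiv.swap (3 : Fin 4) 0 0 = 3 by decide,
    show (3 : Fin 4) = Fin.succ 2 by decide, MvPolynomial.finSuccEquiv_X_succ]

lemma E3_X1 : E3 (MvPolynomial.X 1) = Polynomial.C (MvPolynomial.X 0) := by
  rw [E3, AlgEquiv.trans_apply, MvPolynomial.renameEquiv_apply, MvPolynomial.rename_X,
    show Equiv.swap (3 : Fin 4) 0 1 = 1 by decide,
    show (1 : Fin 4) = Fin.succ 0 by decide, MvPolynomial.finSuccEquiv_X_succ]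

lemma E3_X2 : E3 (MvPolynomial.X 2) = Polynomial.C (MvPolynomial.X 1) := by
  rw [E3, AlgEquiv.trans_apply, MvPolynomial.renameEquiv_apply, MvPolynomial.rename_X,
    show Equiv.swap (3 : Fin 4) 0 2 = 2 by decide,
    show (2 : Fin 4) = Fin.succ 1 by decide, MvPolynomial.finSuccEquiv_X_succ]

/-- degree in `g0` -/
def Dg : DegData R4 where
  d x := (E0 x).natDegree
  hmul x y hx hy := by
    rw [map_mul]
    exact Polynomial.natDegree_mul (by simpa using hx) (by simpa using hy)
  hadd x y := by rw [map_add]; exact Polynomial.natDegree_add_le _ _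
  hneg x := by rw [map_neg, Polynomial.natDegree_neg]

/-- degree in `q` -/
def Dq : DegData R4 where
  d x := (E3 x).natDegree
  hmul x y hx hy := by
    rw [map_mul]
    exact Polynomial.natDegree_mul (by simpa using hx) (by simpa using hy)
  hadd x y := by rw [map_add]; exact Polynomial.natDegree_add_le _ _
  hneg x := by rw [map_neg, Polynomial.natDegree_neg]

open MvPolynomial in
def cc12 : R4 := 3 * X 3 * X 1 - X 3 * X 2 ^ 2
open MvPolynomial in
def cc10 : R4 := 15 * X 3 ^ 2
open MvPolynomial in
def cc7 : R4 := 12 * X 3 ^ 3 * X 1 - 4 * X 3 ^ 3 * X 2 ^ 2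
open MvPolynomial in
def cc6 : R4 := -4 * X 1 ^ 3 * X 3 ^ 3 - 4 * X 0 * X 2 ^ 3 * X 3 ^ 3 - 27 * X 0 ^ 2 * X 3 ^ 3
  + X 1 ^ 2 * X 2 ^ 2 * X 3 ^ 3 + 18 * X 0 * X 1 * X 2 * X 3 ^ 3
open MvPolynomial in
def cc5 : R4 := 48 * X 3 ^ 4
open MvPolynomial in
def cc4 : R4 := -4 * X 2 ^ 4 * X 3 ^ 4 - 36 * X 1 ^ 2 * X 3 ^ 4 + 24 * X 1 * X 2 ^ 2 * X 3 ^ 4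
open MvPolynomial in
def cc2 : R4 := 32 * X 3 ^ 5 * X 2 ^ 2 - 96 * X 3 ^ 5 * X 1
open MvPolynomial in
def cc0 : R4 := 64 * X 3 ^ 6

-- q-degree bounds
lemma dq12 : Dq.d cc12 ≤ 1 := by
  show (E3 cc12).natDegree ≤ 1
  rw [cc12]; simp only [map_mul, map_pow, map_ofNat, map_add, map_sub, map_neg,
    E3_X0, E3_X1, E3_X2, E3_X3]
  compute_degree
lemma dq10 : Dq.d cc10 ≤ 2 := by
  show (E3 cc10).natDegree ≤ 2
  rw [cc10]; simp only [map_mul, map_pow, map_ofNat, map_add, map_sub, map_neg,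
    E3_X0, E3_X1, E3_X2, E3_X3]
  compute_degree
lemma dq7 : Dq.d cc7 ≤ 3 := by
  show (E3 cc7).natDegree ≤ 3
  rw [cc7]; simp only [map_mul, map_pow, map_ofNat, map_add, map_sub, map_neg,
    E3_X0, E3_X1, E3_X2, E3_X3]
  compute_degree
lemma dq6 : Dq.d cc6 ≤ 3 := by
  show (E3 cc6).natDegree ≤ 3
  rw [cc6]; simp only [map_mul, map_pow, map_ofNat, map_add, map_sub, map_neg,
    E3_X0, E3_X1, E3_X2, E3_X3]
  compute_degree
lemma dq5 : Dq.d cc5 ≤ 4 := by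
  show (E3 cc5).natDegree ≤ 4
  rw [cc5]; simp only [map_mul, map_pow, map_ofNat, map_add, map_sub, map_neg,
    E3_X0, E3_X1, E3_X2, E3_X3]
  compute_degree
lemma dq4 : Dq.d cc4 ≤ 4 := by
  show (E3 cc4).natDegree ≤ 4
  rw [cc4]; simp only [map_mul, map_pow, map_ofNat, map_add, map_sub, map_neg,
    E3_X0, E3_X1, E3_X2, E3_X3]
  compute_degree
lemma dq2 : Dq.d cc2 ≤ 5 := by
  show (E3 cc2).natDegree ≤ 5
  rw [cc2]; simp only [map_mul, map_pow, map_ofNat, map_add, map_sub, map_neg,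
    E3_X0, E3_X1, E3_X2, E3_X3]
  compute_degree
lemma dq0 : Dq.d cc0 = 6 := by
  show (E3 cc0).natDegree = 6
  rw [cc0]; simp only [map_mul, map_pow, map_ofNat, E3_X3]
  compute_degree!

-- g0-degree bounds
lemma dg12 : Dg.d cc12 = 0 := by
  have : (E0 cc12).natDegree ≤ 0 := by
    rw [cc12]; simp only [map_mul, map_pow, map_ofNat, map_add, map_sub, map_neg,
      E0_X0, E0_X1, E0_X2, E0_X3]
    compute_degree
  exact Nat.le_zero.1 this
lemma dg10 : Dg.d cc10 = 0 := by
  have : (E0 cc10).natDegree ≤ 0 := by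
    rw [cc10]; simp only [map_mul, map_pow, map_ofNat, map_add, map_sub, map_neg,
      E0_X0, E0_X1, E0_X2, E0_X3]
    compute_degree
  exact Nat.le_zero.1 this
lemma dg7 : Dg.d cc7 = 0 := by
  have : (E0 cc7).natDegree ≤ 0 := by
    rw [cc7]; simp only [map_mul, map_pow, map_ofNat, map_add, map_sub, map_neg,
      E0_X0, E0_X1, E0_X2, E0_X3]
    compute_degree
  exact Nat.le_zero.1 this
lemma dg5 : Dg.d cc5 = 0 := by
  have : (E0 cc5).natDegree ≤ 0 := by
    rw [cc5]; simp only [map_mul, map_pow, map_ofNat, map_add, map_sub, map_neg,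
      E0_X0, E0_X1, E0_X2, E0_X3]
    compute_degree
  exact Nat.le_zero.1 this
lemma dg4 : Dg.d cc4 = 0 := by
  have : (E0 cc4).natDegree ≤ 0 := by
    rw [cc4]; simp only [map_mul, map_pow, map_ofNat, map_add, map_sub, map_neg,
      E0_X0, E0_X1, E0_X2, E0_X3]
    compute_degree
  exact Nat.le_zero.1 this
lemma dg2 : Dg.d cc2 = 0 := by
  have : (E0 cc2).natDegree ≤ 0 := by
    rw [cc2]; simp only [map_mul, map_pow, map_ofNat, map_add, map_sub, map_neg,
      E0_X0, E0_X1, E0_X2, E0_X3]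
    compute_degree
  exact Nat.le_zero.1 this
lemma dg0 : Dg.d cc0 = 0 := by
  have : (E0 cc0).natDegree ≤ 0 := by
    rw [cc0]; simp only [map_mul, map_pow, map_ofNat, map_add, map_sub, map_neg,
      E0_X0, E0_X1, E0_X2, E0_X3]
    compute_degree
  exact Nat.le_zero.1 this
lemma dg6 : Dg.d cc6 = 2 := by
  show (E0 cc6).natDegree = 2
  rw [cc6]; simp only [map_mul, map_pow, map_ofNat, map_add, map_sub, map_neg,
    E0_X0, E0_X1, E0_X2, E0_X3]
  compute_degree!

lemma cc0_ne : cc0 ≠ 0 := by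
  intro h
  have h6 : (E3 cc0).natDegree = 6 := dq0
  rw [h, map_zero, Polynomial.natDegree_zero] at h6
  exact absurd h6 (by norm_num)

lemma cc6_ne : cc6 ≠ 0 := by
  intro h
  have h6 : (E0 cc6).natDegree = 2 := dg6
  rw [h, map_zero, Polynomial.natDegree_zero] at h6
  exact absurd h6 (by norm_num)

end Inst

noncomputable section App
open GaussCore Polynomial

def pp : Polynomial R4 :=
  X ^ 15 + C cc12 * X ^ 12 + C cc10 * X ^ 10 + C cc7 * X ^ 7 + C cc6 * X ^ 6
    + C cc5 * X ^ 5 + C cc4 * X ^ 4 + C cc2 * X ^ 2 - C cc0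

lemma pp_monic : pp.Monic := by unfold pp; monicity!
lemma pp_natDegree : pp.natDegree = 15 := by unfold pp; compute_degree!
lemma pp_ne : pp ≠ 0 := pp_monic.ne_zero

lemma pp_c0 : pp.coeff 0 = -cc0 := by simp [pp, coeff_X_pow]
lemma pp_c2 : pp.coeff 2 = cc2 := by simp [pp, coeff_X_pow]
lemma pp_c4 : pp.coeff 4 = cc4 := by simp [pp, coeff_X_pow]
lemma pp_c5 : pp.coeff 5 = cc5 := by simp [pp, coeff_X_pow]
lemma pp_c6 : pp.coeff 6 = cc6 := by simp [pp, coeff_X_pow]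
lemma pp_c7 : pp.coeff 7 = cc7 := by simp [pp, coeff_X_pow]
lemma pp_c10 : pp.coeff 10 = cc10 := by simp [pp, coeff_X_pow]
lemma pp_c12 : pp.coeff 12 = cc12 := by simp [pp, coeff_X_pow]
lemma pp_c15 : pp.coeff 15 = 1 := by simp [pp, coeff_X_pow]

lemma dq0' : Dq.d (-cc0) = 6 := by rw [Dq.hneg, dq0]
lemma dg0' : Dg.d (-cc0) = 0 := by rw [Dg.hneg, dg0]

lemma pp_facts : ∀ j, pp.coeff j ≠ 0 →
    (5 * Dq.d (pp.coeff j) + 2*j ≤ 30) ∧ (3 * Dg.d (pp.coeff j) ≤ j) ∧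
    (j ≠ 0 → j ≠ 6 → 3 * Dg.d (pp.coeff j) < j) ∧ (9 * Dg.d (pp.coeff j) + 2*j ≤ 30) ∧
    (j ≠ 6 → j ≠ 15 → 9 * Dg.d (pp.coeff j) + 2*j < 30) := by
  intro j hj
  have hj15 : j ≤ 15 := by
    by_contra h
    exact hj (Polynomial.coeff_eq_zero_of_natDegree_lt (by rw [pp_natDegree]; omega))
  interval_cases j
  · rw [pp_c0]
    have h1 := dq0'; have h2 := dg0'
    refine ⟨by omega, by omega, ?_, by omega, ?_⟩
    · intro h _; exact absurd rfl h
    · intro _ _; omega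
  · exact absurd (show pp.coeff 1 = 0 by simp [pp, coeff_X_pow]) hj
  · rw [pp_c2]
    have h1 := dq2; have h2 := dg2
    refine ⟨by omega, by omega, ?_, by omega, ?_⟩
    · intro _ _; omega
    · intro _ _; omega
  · exact absurd (show pp.coeff 3 = 0 by simp [pp, coeff_X_pow]) hj
  · rw [pp_c4]
    have h1 := dq4; have h2 := dg4
    refine ⟨by omega, by omega, ?_, by omega, ?_⟩
    · intro _ _; omega
    · intro _ _; omega
  · rw [pp_c5]
    have h1 := dq5; have h2 := dg5
    refine ⟨by omega, by omega, ?_, by omega, ?_⟩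
    · intro _ _; omega
    · intro _ _; omega
  · rw [pp_c6]
    have h1 := dq6; have h2 := dg6
    refine ⟨by omega, by omega, ?_, by omega, ?_⟩
    · intro _ h; exact absurd rfl h
    · intro h _; exact absurd rfl h
  · rw [pp_c7]
    have h1 := dq7; have h2 := dg7
    refine ⟨by omega, by omega, ?_, by omega, ?_⟩
    · intro _ _; omega
    · intro _ _; omega
  · exact absurd (show pp.coeff 8 = 0 by simp [pp, coeff_X_pow]) hj
  · exact absurd (show pp.coeff 9 = 0 by simp [pp, coeff_X_pow]) hj
  · rw [pp_c10]
    have h1 := dq10; have h2 := dg10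
    refine ⟨by omega, by omega, ?_, by omega, ?_⟩
    · intro _ _; omega
    · intro _ _; omega
  · exact absurd (show pp.coeff 11 = 0 by simp [pp, coeff_X_pow]) hj
  · rw [pp_c12]
    have h1 := dq12; have h2 := dg12
    refine ⟨by omega, by omega, ?_, by omega, ?_⟩
    · intro _ _; omega
    · intro _ _; omega
  · exact absurd (show pp.coeff 13 = 0 by simp [pp, coeff_X_pow]) hj
  · exact absurd (show pp.coeff 14 = 0 by simp [pp, coeff_X_pow]) hj
  · rw [pp_c15]
    have h1 := Dq.done; have h2 := Dg.done
    refine ⟨by omega, by omega, ?_, by omega, ?_⟩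
    · intro _ _; omega
    · intro _ h; exact absurd rfl h

end App

noncomputable section App2
open GaussCore Polynomial

lemma supp0 : (0 : ℕ) ∈ pp.support :=
  Polynomial.mem_support_iff.2 (by rw [pp_c0]; exact neg_ne_zero.2 cc0_ne)
lemma supp6 : (6 : ℕ) ∈ pp.support :=
  Polynomial.mem_support_iff.2 (by rw [pp_c6]; exact cc6_ne)
lemma supp15 : (15 : ℕ) ∈ pp.support :=
  Polynomial.mem_support_iff.2 (by rw [pp_c15]; exact one_ne_zero)

lemma att_q_0 : (0 : ℕ) ∈ att Dq 2 5 pp := by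
  refine Finset.mem_filter.2 ⟨supp0, fun j hjs => ?_⟩
  have hf := (pp_facts j (Polynomial.mem_support_iff.1 hjs)).1
  unfold vv
  rw [pp_c0, dq0']
  push_cast
  omega

lemma att_q_15 : (15 : ℕ) ∈ att Dq 2 5 pp := by
  refine Finset.mem_filter.2 ⟨supp15, fun j hjs => ?_⟩
  have hf := (pp_facts j (Polynomial.mem_support_iff.1 hjs)).1
  unfold vv
  rw [pp_c15, Dq.done]
  push_cast
  omega

lemma att_g1_0 : (0 : ℕ) ∈ att Dg (-1) 3 pp := by
  refine Finset.mem_filter.2 ⟨supp0, fun j hjs => ?_⟩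
  have hf := (pp_facts j (Polynomial.mem_support_iff.1 hjs)).2.1
  unfold vv
  rw [pp_c0, dg0']
  push_cast
  omega

lemma att_g1_6 : (6 : ℕ) ∈ att Dg (-1) 3 pp := by
  refine Finset.mem_filter.2 ⟨supp6, fun j hjs => ?_⟩
  have hf := (pp_facts j (Polynomial.mem_support_iff.1 hjs)).2.1
  unfold vv
  rw [pp_c6, dg6]
  push_cast
  omega

lemma att_g2_15 : (15 : ℕ) ∈ att Dg 2 9 pp := by
  refine Finset.mem_filter.2 ⟨supp15, fun j hjs => ?_⟩
  have hf := (pp_facts j (Polynomial.mem_support_iff.1 hjs)).2.2.2.1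
  unfold vv
  rw [pp_c15, Dg.done]
  push_cast
  omega

lemma att_g2_6 : (6 : ℕ) ∈ att Dg 2 9 pp := by
  refine Finset.mem_filter.2 ⟨supp6, fun j hjs => ?_⟩
  have hf := (pp_facts j (Polynomial.mem_support_iff.1 hjs)).2.2.2.1
  unfold vv
  rw [pp_c6, dg6]
  push_cast
  omega

lemma pp_supp_le {j : ℕ} (hj : j ∈ pp.support) : j ≤ 15 := by
  have := Polynomial.le_natDegree_of_mem_supp j hj
  rwa [pp_natDegree] at this

lemma ipq_pp : ip Dq 2 5 pp = 15 := by
  rw [ip_eq_max' Dq 2 5 pp_ne]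
  refine le_antisymm (Finset.max'_le _ _ _ ?_) (Finset.le_max' _ _ att_q_15)
  intro x hx
  exact pp_supp_le (mem_support_of_mem_att Dq 2 5 hx)

lemma imq_pp : im Dq 2 5 pp = 0 := by
  rw [im_eq_min' Dq 2 5 pp_ne]
  exact le_antisymm (Finset.min'_le _ _ att_q_0) (Nat.zero_le _)

lemma img1_pp : im Dg (-1) 3 pp = 0 := by
  rw [im_eq_min' Dg (-1) 3 pp_ne]
  exact le_antisymm (Finset.min'_le _ _ att_g1_0) (Nat.zero_le _)

lemma ipg2_pp : ip Dg 2 9 pp = 15 := by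
  rw [ip_eq_max' Dg 2 9 pp_ne]
  refine le_antisymm (Finset.max'_le _ _ _ ?_) (Finset.le_max' _ _ att_g2_15)
  intro x hx
  exact pp_supp_le (mem_support_of_mem_att Dg 2 9 hx)

lemma ipg1_pp : ip Dg (-1) 3 pp = 6 := by
  rw [ip_eq_max' Dg (-1) 3 pp_ne]
  refine le_antisymm (Finset.max'_le _ _ _ ?_) (Finset.le_max' _ _ att_g1_6)
  intro x hx
  rcases Finset.mem_filter.1 hx with ⟨hxs, hxb⟩
  by_contra hgt
  push_neg at hgt
  have hf := (pp_facts x (Polynomial.mem_support_iff.1 hxs)).2.2.1 (by omega) (by omega)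
  have h6 := hxb 6 supp6
  unfold vv at h6
  rw [pp_c6, dg6] at h6
  push_cast at h6
  omega

lemma img2_pp : im Dg 2 9 pp = 6 := by
  rw [im_eq_min' Dg 2 9 pp_ne]
  refine le_antisymm (Finset.min'_le _ _ att_g2_6) (Finset.le_min' _ _ _ ?_)
  intro x hx
  rcases Finset.mem_filter.1 hx with ⟨hxs, hxb⟩
  by_contra hlt
  push_neg at hlt
  have hf := (pp_facts x (Polynomial.mem_support_iff.1 hxs)).2.2.2.2 (by omega) (by omega)
  have h15 := hxb 15 supp15
  unfold vv at h15
  rw [pp_c15, Dg.done] at h15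
  push_cast at h15
  omega

end App2

noncomputable section App3
open GaussCore Polynomial

lemma no_middle (a b : Polynomial R4) (ha : a.Monic) (hb : b.Monic) (hab : pp = a * b) :
    a.natDegree = 0 ∨ b.natDegree = 0 := by
  by_contra hcon
  push_neg at hcon
  obtain ⟨ha0, hb0⟩ := hcon
  have hA : a ≠ 0 := ha.ne_zero
  have hB : b ≠ 0 := hb.ne_zero
  have hAB : a * b ≠ 0 := mul_ne_zero hA hB
  have hdeg : a.natDegree + b.natDegree = 15 := by
    have h := pp_natDegree
    rw [hab, Polynomial.natDegree_mul hA hB] at h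
    exact h
  -- transported polygon data for the product
  have e1 : ip Dq 2 5 (a * b) = 15 := by rw [← hab]; exact ipq_pp
  have e2 : im Dq 2 5 (a * b) = 0 := by rw [← hab]; exact imq_pp
  have e3 : ip Dg (-1) 3 (a * b) = 6 := by rw [← hab]; exact ipg1_pp
  have e4 : im Dg (-1) 3 (a * b) = 0 := by rw [← hab]; exact img1_pp
  have e5 : ip Dg 2 9 (a * b) = 15 := by rw [← hab]; exact ipg2_pp
  have e6 : im Dg 2 9 (a * b) = 6 := by rw [← hab]; exact img2_pp
  rw [ip_mul Dq 2 5 hA hB (by norm_num) hAB] at e1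
  rw [im_mul Dq 2 5 hA hB (by norm_num) hAB] at e2
  rw [ip_mul Dg (-1) 3 hA hB (by norm_num) hAB] at e3
  rw [im_mul Dg (-1) 3 hA hB (by norm_num) hAB] at e4
  rw [ip_mul Dg 2 9 hA hB (by norm_num) hAB] at e5
  rw [im_mul Dg 2 9 hA hB (by norm_num) hAB] at e6
  -- leading indices are the degrees
  have hq_a : ip Dq 2 5 a = a.natDegree := by
    have h1 := ip_le_natDegree Dq 2 5 hA
    have h2 := ip_le_natDegree Dq 2 5 hB
    omega
  have hq_b : ip Dq 2 5 b = b.natDegree := by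
    have h1 := ip_le_natDegree Dq 2 5 hA
    have h2 := ip_le_natDegree Dq 2 5 hB
    omega
  have hg2_a : ip Dg 2 9 a = a.natDegree := by
    have h1 := ip_le_natDegree Dg 2 9 hA
    have h2 := ip_le_natDegree Dg 2 9 hB
    omega
  -- the q-polygon equation for `a` : 2 * deg a = 5 * (q-degree of constant coeff)
  have hq : (2 : ℤ) * a.natDegree = 5 * Dq.d (a.coeff 0) := by
    have hvv := att_vv_eq Dq 2 5 (ip_mem Dq 2 5 hA) (im_mem Dq 2 5 hA)
    rw [hq_a] at hvv
    have him : im Dq 2 5 a = 0 := by omega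
    rw [him] at hvv
    unfold vv at hvv
    rw [show a.coeff a.natDegree = 1 from ha] at hvv
    rw [Dq.done] at hvv
    push_cast at hvv
    omega
  -- the first g0-polygon equation for `a`
  have hg1 : (3 : ℤ) * Dg.d (a.coeff (ip Dg (-1) 3 a)) - (ip Dg (-1) 3 a : ℤ)
      = 3 * Dg.d (a.coeff 0) := by
    have hvv := att_vv_eq Dg (-1) 3 (ip_mem Dg (-1) 3 hA) (im_mem Dg (-1) 3 hA)
    have him : im Dg (-1) 3 a = 0 := by omega
    rw [him] at hvv
    unfold vv at hvv
    push_cast at hvv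
    omega
  -- the second g0-polygon equation for `a`
  have hg2 : (9 : ℤ) * Dg.d (a.coeff (im Dg 2 9 a)) + 2 * (im Dg 2 9 a : ℤ)
      = 2 * a.natDegree := by
    have hvv := att_vv_eq Dg 2 9 (ip_mem Dg 2 9 hA) (im_mem Dg 2 9 hA)
    rw [hg2_a] at hvv
    unfold vv at hvv
    rw [show a.coeff a.natDegree = 1 from ha] at hvv
    rw [Dg.done] at hvv
    push_cast at hvv
    omega
  -- convexity : β = α (for both factors, using the sums)
  have conv : ∀ (c : Polynomial R4) (hc : c ≠ 0),
      ip Dg (-1) 3 c ≤ im Dg 2 9 c := by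
    intro c hc
    have h1 := le_att Dg (-1) 3 (ip_mem Dg (-1) 3 hc)
      (mem_support_of_mem_att Dg 2 9 (im_mem Dg 2 9 hc))
    have h2 := le_att Dg 2 9 (im_mem Dg 2 9 hc)
      (mem_support_of_mem_att Dg (-1) 3 (ip_mem Dg (-1) 3 hc))
    unfold vv at h1 h2
    push_cast at h1 h2
    omega
  have hconv_a := conv a hA
  have hconv_b := conv b hB
  have hβα : im Dg 2 9 a = ip Dg (-1) 3 a := by omega
  -- final contradiction
  rw [hβα] at hg2
  have h5 : (5:ℤ) ∣ 2 * a.natDegree := ⟨Dq.d (a.coeff 0), hq⟩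
  have h3 : (3:ℤ) ∣ (ip Dg (-1) 3 a : ℤ) :=
    ⟨(Dg.d (a.coeff (ip Dg (-1) 3 a)) : ℤ) - Dg.d (a.coeff 0), by omega⟩
  omega

theorem pp_irred : Irreducible pp := by
  constructor
  · intro hu
    have h := Polynomial.natDegree_eq_zero_of_isUnit hu
    rw [pp_natDegree] at h
    exact absurd h (by norm_num)
  · intro a b hab
    have hmab : (a * b).Monic := by rw [← hab]; exact pp_monic
    have hlc : a.leadingCoeff * b.leadingCoeff = 1 := by
      have := hmab
      unfold Monic at this
      rwa [Polynomial.leadingCoeff_mul] at this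
    have hA : a ≠ 0 := by
      intro h; rw [h, Polynomial.leadingCoeff_zero, zero_mul] at hlc
      exact zero_ne_one hlc
    have hB : b ≠ 0 := by
      intro h; rw [h, Polynomial.leadingCoeff_zero, mul_zero] at hlc
      exact zero_ne_one hlc
    set a' := C b.leadingCoeff * a with ha'
    set b' := C a.leadingCoeff * b with hb'
    have hCa : (C a.leadingCoeff : Polynomial R4) ≠ 0 := by
      rw [Ne, Polynomial.C_eq_zero]
      exact Polynomial.leadingCoeff_ne_zero.2 hA
    have hCb : (C b.leadingCoeff : Polynomial R4) ≠ 0 := by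
      rw [Ne, Polynomial.C_eq_zero]
      exact Polynomial.leadingCoeff_ne_zero.2 hB
    have hab' : pp = a' * b' := by
      rw [hab, ha', hb']
      rw [show C b.leadingCoeff * a * (C a.leadingCoeff * b)
          = C (a.leadingCoeff * b.leadingCoeff) * (a * b) by rw [C_mul]; ring]
      rw [hlc, map_one, one_mul]
    have hma : a'.Monic := by
      unfold Monic
      rw [ha', Polynomial.leadingCoeff_mul, Polynomial.leadingCoeff_C, mul_comm]
      exact hlc
    have hmb : b'.Monic := by
      unfold Monic
      rw [hb', Polynomial.leadingCoeff_mul, Polynomial.leadingCoeff_C]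
      exact hlc
    rcases no_middle a' b' hma hmb hab' with h | h
    · left
      rw [ha', Polynomial.natDegree_mul hCb hA, Polynomial.natDegree_C] at h
      have haC := Polynomial.eq_C_of_natDegree_eq_zero (by omega : a.natDegree = 0)
      rw [haC]
      refine Polynomial.isUnit_C.2 (IsUnit.of_mul_eq_one b.leadingCoeff ?_)
      have : a.leadingCoeff = a.coeff 0 := by
        unfold leadingCoeff
        rw [(by omega : a.natDegree = 0)]
      rw [← this]
      exact hlc
    · right
      rw [hb', Polynomial.natDegree_mul hCa hB, Polynomial.natDegree_C] at h
      have hbC := Polynomial.eq_C_of_natDegree_eq_zero (by omega : b.natDegree = 0)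
      rw [hbC]
      refine Polynomial.isUnit_C.2 (IsUnit.of_mul_eq_one a.leadingCoeff ?_)
      have : b.leadingCoeff = b.coeff 0 := by
        unfold leadingCoeff
        rw [(by omega : b.natDegree = 0)]
      rw [← this]
      rw [mul_comm] at hlc
      exact hlc

end App3

lemma hmap_generic {L : Type*} [CommRing L] [Algebra R4 L] :
    Polynomial.map (algebraMap R4 L) pp
      = Polynomial.X ^ 15
      + Polynomial.C (3 * (algebraMap R4 L (MvPolynomial.X 3)) * (algebraMap R4 L (MvPolynomial.X 1)) - (algebraMap R4 L (MvPolynomial.X 3)) * (algebraMap R4 L (MvPolynomial.X 2)) ^ 2) * Polynomial.X ^ 12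
      + Polynomial.C (15 * (algebraMap R4 L (MvPolynomial.X 3)) ^ 2) * Polynomial.X ^ 10
      + Polynomial.C (12 * (algebraMap R4 L (MvPolynomial.X 3)) ^ 3 * (algebraMap R4 L (MvPolynomial.X 1)) - 4 * (algebraMap R4 L (MvPolynomial.X 3)) ^ 3 * (algebraMap R4 L (MvPolynomial.X 2)) ^ 2) * Polynomial.X ^ 7
      + Polynomial.C (-4 * (algebraMap R4 L (MvPolynomial.X 1)) ^ 3 * (algebraMap R4 L (MvPolynomial.X 3)) ^ 3 - 4 * (algebraMap R4 L (MvPolynomial.X 0)) * (algebraMap R4 L (MvPolynomial.X 2)) ^ 3 * (algebraMap R4 L (MvPolynomial.X 3)) ^ 3 - 27 * (algebraMap R4 L (MvPolynomial.X 0)) ^ 2 * (algebraMap R4 L (MvPolynomial.X 3)) ^ 3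
          + (algebraMap R4 L (MvPolynomial.X 1)) ^ 2 * (algebraMap R4 L (MvPolynomial.X 2)) ^ 2 * (algebraMap R4 L (MvPolynomial.X 3)) ^ 3 + 18 * (algebraMap R4 L (MvPolynomial.X 0)) * (algebraMap R4 L (MvPolynomial.X 1)) * (algebraMap R4 L (MvPolynomial.X 2)) * (algebraMap R4 L (MvPolynomial.X 3)) ^ 3) * Polynomial.X ^ 6
      + Polynomial.C (48 * (algebraMap R4 L (MvPolynomial.X 3)) ^ 4) * Polynomial.X ^ 5
      + Polynomial.C (-4 * (algebraMap R4 L (MvPolynomial.X 2)) ^ 4 * (algebraMap R4 L (MvPolynomial.X 3)) ^ 4 - 36 * (algebraMap R4 L (MvPolynomial.X 1)) ^ 2 * (algebraMap R4 L (MvPolynomial.X 3)) ^ 4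
          + 24 * (algebraMap R4 L (MvPolynomial.X 1)) * (algebraMap R4 L (MvPolynomial.X 2)) ^ 2 * (algebraMap R4 L (MvPolynomial.X 3)) ^ 4) * Polynomial.X ^ 4
      + Polynomial.C (32 * (algebraMap R4 L (MvPolynomial.X 3)) ^ 5 * (algebraMap R4 L (MvPolynomial.X 2)) ^ 2 - 96 * (algebraMap R4 L (MvPolynomial.X 3)) ^ 5 * (algebraMap R4 L (MvPolynomial.X 1))) * Polynomial.X ^ 2
      - Polynomial.C (64 * (algebraMap R4 L (MvPolynomial.X 3)) ^ 6) := by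
  unfold pp cc12 cc10 cc7 cc6 cc5 cc4 cc2 cc0
  simp only [Polynomial.map_add, Polynomial.map_sub, Polynomial.map_mul, Polynomial.map_pow,
    Polynomial.map_X, Polynomial.map_C, Polynomial.map_neg, Polynomial.map_ofNat,
    map_mul, map_add, map_sub, map_neg, map_pow, map_ofNat]

theorem U5_aux :
    Irreducible ((Polynomial.X ^ 15
      + Polynomial.C (3 * (algebraMap R4 (FractionRing R4) (MvPolynomial.X 3)) * (algebraMap R4 (FractionRing R4) (MvPolynomial.X 1)) - (algebraMap R4 (FractionRing R4) (MvPolynomial.X 3)) * (algebraMap R4 (FractionRing R4) (MvPolynomial.X 2)) ^ 2) * Polynomial.X ^ 12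
      + Polynomial.C (15 * (algebraMap R4 (FractionRing R4) (MvPolynomial.X 3)) ^ 2) * Polynomial.X ^ 10
      + Polynomial.C (12 * (algebraMap R4 (FractionRing R4) (MvPolynomial.X 3)) ^ 3 * (algebraMap R4 (FractionRing R4) (MvPolynomial.X 1)) - 4 * (algebraMap R4 (FractionRing R4) (MvPolynomial.X 3)) ^ 3 * (algebraMap R4 (FractionRing R4) (MvPolynomial.X 2)) ^ 2) * Polynomial.X ^ 7
      + Polynomial.C (-4 * (algebraMap R4 (FractionRing R4) (MvPolynomial.X 1)) ^ 3 * (algebraMap R4 (FractionRing R4) (MvPolynomial.X 3)) ^ 3 - 4 * (algebraMap R4 (FractionRing R4) (MvPolynomial.X 0)) * (algebraMap R4 (FractionRing R4) (MvPolynomial.X 2)) ^ 3 * (algebraMap R4 (FractionRing R4) (MvPolynomial.X 3)) ^ 3 - 27 * (algebraMap R4 (FractionRing R4) (MvPolynomial.X 0)) ^ 2 * (algebraMap R4 (FractionRing R4) (MvPolynomial.X 3)) ^ 3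
          + (algebraMap R4 (FractionRing R4) (MvPolynomial.X 1)) ^ 2 * (algebraMap R4 (FractionRing R4) (MvPolynomial.X 2)) ^ 2 * (algebraMap R4 (FractionRing R4) (MvPolynomial.X 3)) ^ 3 + 18 * (algebraMap R4 (FractionRing R4) (MvPolynomial.X 0)) * (algebraMap R4 (FractionRing R4) (MvPolynomial.X 1)) * (algebraMap R4 (FractionRing R4) (MvPolynomial.X 2)) * (algebraMap R4 (FractionRing R4) (MvPolynomial.X 3)) ^ 3) * Polynomial.X ^ 6
      + Polynomial.C (48 * (algebraMap R4 (FractionRing R4) (MvPolynomial.X 3)) ^ 4) * Polynomial.X ^ 5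
      + Polynomial.C (-4 * (algebraMap R4 (FractionRing R4) (MvPolynomial.X 2)) ^ 4 * (algebraMap R4 (FractionRing R4) (MvPolynomial.X 3)) ^ 4 - 36 * (algebraMap R4 (FractionRing R4) (MvPolynomial.X 1)) ^ 2 * (algebraMap R4 (FractionRing R4) (MvPolynomial.X 3)) ^ 4
          + 24 * (algebraMap R4 (FractionRing R4) (MvPolynomial.X 1)) * (algebraMap R4 (FractionRing R4) (MvPolynomial.X 2)) ^ 2 * (algebraMap R4 (FractionRing R4) (MvPolynomial.X 3)) ^ 4) * Polynomial.X ^ 4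
      + Polynomial.C (32 * (algebraMap R4 (FractionRing R4) (MvPolynomial.X 3)) ^ 5 * (algebraMap R4 (FractionRing R4) (MvPolynomial.X 2)) ^ 2 - 96 * (algebraMap R4 (FractionRing R4) (MvPolynomial.X 3)) ^ 5 * (algebraMap R4 (FractionRing R4) (MvPolynomial.X 1))) * Polynomial.X ^ 2
      - Polynomial.C (64 * (algebraMap R4 (FractionRing R4) (MvPolynomial.X 3)) ^ 6) : Polynomial (FractionRing R4))) := by
  rw [← hmap_generic]
  exact (pp_monic.irreducible_iff_irreducible_map_fraction_map).mp pp_irred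

/-- The degree-15 characteristic polynomial of the operator `x = v₀/5` in the
fifteen rank-three, `t = 1`, `{1,1}` vacua of the U(5) theory with one adjoint
is irreducible over the field `ℂ(g₀,g₁,g₂,q)` of rational functions in four
independent indeterminates over `ℂ`. -/
theorem U5_rank3_poly_irreducible :
    let R := MvPolynomial (Fin 4) ℂ
    let K := FractionRing R
    let g0 : K := algebraMap R K (MvPolynomial.X 0)
    let g1 : K := algebraMap R K (MvPolynomial.X 1)
    let g2 : K := algebraMap R K (MvPolynomial.X 2)
    let q : K := algebraMap R K (MvPolynomial.X 3)
    Irreducible (Polynomial.X ^ 15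
      + Polynomial.C (3 * q * g1 - q * g2 ^ 2) * Polynomial.X ^ 12
      + Polynomial.C (15 * q ^ 2) * Polynomial.X ^ 10
      + Polynomial.C (12 * q ^ 3 * g1 - 4 * q ^ 3 * g2 ^ 2) * Polynomial.X ^ 7
      + Polynomial.C (-4 * g1 ^ 3 * q ^ 3 - 4 * g0 * g2 ^ 3 * q ^ 3 - 27 * g0 ^ 2 * q ^ 3
          + g1 ^ 2 * g2 ^ 2 * q ^ 3 + 18 * g0 * g1 * g2 * q ^ 3) * Polynomial.X ^ 6
      + Polynomial.C (48 * q ^ 4) * Polynomial.X ^ 5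
      + Polynomial.C (-4 * g2 ^ 4 * q ^ 4 - 36 * g1 ^ 2 * q ^ 4
          + 24 * g1 * g2 ^ 2 * q ^ 4) * Polynomial.X ^ 4
      + Polynomial.C (32 * q ^ 5 * g2 ^ 2 - 96 * q ^ 5 * g1) * Polynomial.X ^ 2
      - Polynomial.C (64 * q ^ 6) : Polynomial K) := by
  exact U5_aux
end
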